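/- arXiv:2408.16819 — 2 statements merged into one kernel-verified Lean document; each statement's English description precedes it below -/
import Mathlib

section
/- The coefficients e_T defined by the recursion e_T = − Σ_{m=1}^{n_T−1} Σ_{∪ₖ Tₖ ≃ T} e_{T/{Tₖ}} ∏ₖ a_{Tₖ} (sum over decompositions of T into m ≥ 1 but fewer than n_T non-intersecting subtrees, with T/{Tₖ} the tree obtained by collapsing each subtree to a vertex), together with e_• = 1, vanish for every tree T with an even number of vertices. -/
open scoped Classical

/-- An (oriented, labelled) graph on a finite set of natural-number vertices,
given by its vertex set and an oriented edge relation. -/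
structure DiGraph where
  verts : Finset ℕ
  E : ℕ → ℕ → Prop

namespace DiGraph

/-- The underlying (unoriented) simple graph on the vertex set. -/
def symGraph (G : DiGraph) : SimpleGraph {x : ℕ // x ∈ G.verts} where
  Adj a b := (G.E a.1 b.1 ∨ G.E b.1 a.1) ∧ a ≠ b
  symm := ⟨fun a b h => ⟨h.1.symm, h.2.symm⟩⟩
  loopless := ⟨fun a h => h.2 rfl⟩

/-- `G` is an oriented unrooted labelled tree: its edges join vertices of `G`,
no edge occurs in both orientations, and the underlying simple graph is a tree. -/
def IsOTree (G : DiGraph) : Prop :=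
  (∀ i j, G.E i j → i ∈ G.verts ∧ j ∈ G.verts) ∧
  (∀ i j, G.E i j → ¬ G.E j i) ∧
  G.symGraph.IsTree

/-- The number `n_v⁺` of edges oriented into the vertex `v`. -/
noncomputable def inDeg (G : DiGraph) (v : ℕ) : ℕ :=
  (G.verts.filter fun w => G.E w v).card

/-- The graph obtained by deleting the vertex `v`. -/
def delV (G : DiGraph) (v : ℕ) : DiGraph :=
  ⟨G.verts.erase v, fun i j => G.E i j ∧ i ≠ v ∧ j ≠ v⟩

/-- The subgraph induced on a set `s` of vertices. -/
def induce (G : DiGraph) (s : Finset ℕ) : DiGraph :=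
  ⟨s, fun i j => G.E i j ∧ i ∈ s ∧ j ∈ s⟩

/-- The vertex set of a connected component of (the underlying graph of) `G`. -/
noncomputable def compVerts (G : DiGraph) (c : G.symGraph.ConnectedComponent) : Finset ℕ :=
  G.verts.filter fun x => ∃ h : x ∈ G.verts, G.symGraph.connectedComponentMk ⟨x, h⟩ = c

/-- The subgraph of `G` given by a connected component. -/
noncomputable def component (G : DiGraph) (c : G.symGraph.ConnectedComponent) : DiGraph :=
  G.induce (G.compVerts c)

/-- `a : DiGraph → ℚ` satisfies the defining recursion of the tree coefficients `a_T`: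
`a_• = 1` for the one-vertex tree, and for a tree `T` with at least two vertices
`a_T = (1/n_T) Σ_{v ∈ V_T} (−1)^{n_v⁺} ∏_s a_{T_s(v)}`,
the product running over the connected components of `T` with the vertex `v` deleted. -/
def ARec (a : DiGraph → ℚ) : Prop :=
  (∀ G : DiGraph, G.IsOTree → G.verts.card = 1 → a G = 1) ∧
  (∀ G : DiGraph, G.IsOTree → 2 ≤ G.verts.card →
    a G = (1 / (G.verts.card : ℚ)) * ∑ v ∈ G.verts, (-1 : ℚ) ^ (G.inDeg v) *
      ∏ᶠ c : (G.delV v).symGraph.ConnectedComponent, a ((G.delV v).component c))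

end DiGraph

namespace DiGraph

/-- `P` is a decomposition of the tree `G` into non-intersecting subtrees:
a partition of the vertex set of `G` into nonempty blocks, each of which induces a
(connected) subtree of `G`. -/
def IsDecomp (G : DiGraph) (P : Finset (Finset ℕ)) : Prop :=
  (∀ s ∈ P, s.Nonempty) ∧
  (∀ s ∈ P, ∀ t ∈ P, s ≠ t → Disjoint s t) ∧
  P.biUnion id = G.verts ∧
  (∀ s ∈ P, (G.induce s).IsOTree)

/-- The quotient graph `T/{Tₖ}` obtained from `G` by collapsing each block of the
decomposition `P` to a single vertex (represented by the largest element of the block);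
two blocks are joined, with the induced orientation, whenever some edge of `G` joins
them. -/
noncomputable def quotGraph (G : DiGraph) (P : Finset (Finset ℕ)) : DiGraph :=
  ⟨P.image fun s => s.sup id,
   fun b b' => b ≠ b' ∧ ∃ s ∈ P, ∃ t ∈ P, s.sup id = b ∧ t.sup id = b' ∧
     ∃ i ∈ s, ∃ j ∈ t, G.E i j⟩

/-- `e : DiGraph → ℚ` satisfies, relative to `a`, the defining recursion of the
coefficients `e_T`:  `e_• = 1` and, for a tree with at least two vertices,
`e_T = − Σ_{m=1}^{n_T−1} Σ_{∪ₖ Tₖ ≃ T} e_{T/{Tₖ}} ∏ₖ a_{Tₖ}`,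
the sum running over all decompositions of `T` into `m < n_T` non-intersecting subtrees
(equivalently, decompositions with at least one non-trivial subtree). -/
def ERec (a e : DiGraph → ℚ) : Prop :=
  (∀ G : DiGraph, G.IsOTree → G.verts.card = 1 → e G = 1) ∧
  (∀ G : DiGraph, G.IsOTree → 2 ≤ G.verts.card →
    e G = - ∑ P ∈ (G.verts.powerset.powerset).filter
        (fun P => G.IsDecomp P ∧ P.card < G.verts.card),
      e (G.quotGraph P) * ∏ s ∈ P, a (G.induce s))

end DiGraph


namespace TreeAux

open SimpleGraph Finset

variable {V : Type} [Fintype V]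

private lemma ncard_eq_card_edgeFinset (G : SimpleGraph V) [Fintype G.edgeSet] :
    G.edgeSet.ncard = G.edgeFinset.card :=
  Set.ncard_eq_toFinset_card' _

private lemma delete_edge_surgery (G : SimpleGraph V) (hc : G.Connected)
    (hac : ¬ G.IsAcyclic) :
    ∃ G' : SimpleGraph V, G'.Connected ∧ G'.edgeSet.ncard + 1 = G.edgeSet.ncard := by
  rw [SimpleGraph.isAcyclic_iff_forall_adj_isBridge] at hac
  push_neg at hac
  obtain ⟨v, w, hadj, hbr⟩ := hac
  rw [SimpleGraph.isBridge_iff] at hbr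
  have hreach : (G \ SimpleGraph.fromEdgeSet {s(v, w)}).Reachable v w := by
    by_contra h; exact hbr h
  refine ⟨G \ SimpleGraph.fromEdgeSet {s(v, w)}, ?_, ?_⟩
  · have hstep : ∀ a b : V, G.Adj a b →
        (G \ SimpleGraph.fromEdgeSet {s(v, w)}).Reachable a b := by
      intro a b hab
      by_cases he : s(a, b) = s(v, w)
      · rw [Sym2.eq_iff] at he
        rcases he with ⟨rfl, rfl⟩ | ⟨rfl, rfl⟩
        · exact hreach
        · exact hreach.symm
      · exact SimpleGraph.Adj.reachable
          ⟨hab, by simp [SimpleGraph.fromEdgeSet_adj, he]⟩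
    have hne : Nonempty V := hc.nonempty
    refine SimpleGraph.Connected.mk ?_
    intro x y
    obtain ⟨p⟩ := hc.preconnected x y
    induction p with
    | nil => exact SimpleGraph.Reachable.refl _
    | cons h q ih => exact (hstep _ _ h).trans ih
  · have hedge : (G \ SimpleGraph.fromEdgeSet {s(v, w)}).edgeSet
        = G.edgeSet \ {s(v, w)} := by
      rw [SimpleGraph.edgeSet_sdiff, SimpleGraph.edgeSet_fromEdgeSet]
      ext e
      simp only [Set.mem_diff, Set.mem_setOf_eq, Set.mem_singleton_iff]
      constructor
      · rintro ⟨h1, h2⟩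
        exact ⟨h1, fun hh => h2 ⟨hh, by simp [hh, Sym2.mk_isDiag_iff, hadj.ne]⟩⟩
      · rintro ⟨h1, h2⟩
        exact ⟨h1, fun hh => h2 hh.1⟩
    rw [hedge]
    have hmem : s(v, w) ∈ G.edgeSet := hadj
    have hfin : G.edgeSet.Finite := G.edgeSet.toFinite
    rw [Set.ncard_diff_singleton_of_mem hmem]
    have hpos : 0 < G.edgeSet.ncard := by
      rw [Set.ncard_pos hfin]; exact ⟨_, hmem⟩
    omega

private lemma card_le_of_connected : ∀ (k : ℕ) (G : SimpleGraph V),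
    G.edgeSet.ncard = k → G.Connected → Fintype.card V ≤ k + 1 := by
  intro k
  induction k using Nat.strong_induction_on with
  | _ k ih =>
    intro G hk hc
    by_cases hac : G.IsAcyclic
    · have h1 := SimpleGraph.IsTree.card_edgeFinset ⟨hc, hac⟩
      rw [← ncard_eq_card_edgeFinset] at h1
      omega
    · obtain ⟨G', hconn', hcard'⟩ := delete_edge_surgery G hc hac
      have hlt : G'.edgeSet.ncard < k := by omega
      have := ih _ hlt G' rfl hconn'
      omega

private lemma isTree_of_connected_of_card (G : SimpleGraph V)
    (hc : G.Connected) (hcard : G.edgeSet.ncard + 1 ≤ Fintype.card V) : G.IsTree := by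
  refine ⟨hc, ?_⟩
  by_contra hac
  obtain ⟨G', hconn', hcard'⟩ := delete_edge_surgery G hc hac
  have := card_le_of_connected _ G' rfl hconn'
  omega

end TreeAux
/-! ### Basic infrastructure -/

namespace DiGraph

open Finset

/-- The edge relation joins vertices and no edge occurs in both orientations. -/
def Good (G : DiGraph) : Prop :=
  (∀ i j, G.E i j → i ∈ G.verts ∧ j ∈ G.verts) ∧ (∀ i j, G.E i j → ¬ G.E j i)

lemma Good.ne {G : DiGraph} (h : G.Good) {i j : ℕ} (hij : G.E i j) : i ≠ j := by
  rintro rfl; exact h.2 i i hij hij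

lemma IsOTree.good {G : DiGraph} (h : G.IsOTree) : G.Good := ⟨h.1, h.2.1⟩

lemma ext' {G H : DiGraph} (hv : G.verts = H.verts)
    (he : ∀ i j, G.E i j ↔ H.E i j) : G = H := by
  cases G; cases H
  simp only [mk.injEq]
  exact ⟨hv, funext fun i => funext fun j => propext (he i j)⟩

@[simp] lemma induce_verts (G : DiGraph) (s : Finset ℕ) : (G.induce s).verts = s := rfl

@[simp] lemma induce_E (G : DiGraph) (s : Finset ℕ) (i j : ℕ) :
    (G.induce s).E i j ↔ G.E i j ∧ i ∈ s ∧ j ∈ s := Iff.rfl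

@[simp] lemma delV_verts (G : DiGraph) (v : ℕ) : (G.delV v).verts = G.verts.erase v := rfl

lemma Good.induce {G : DiGraph} (h : G.Good) (s : Finset ℕ) : (G.induce s).Good := by
  constructor
  · intro i j hij; exact ⟨hij.2.1, hij.2.2⟩
  · intro i j hij hji; exact h.2 i j hij.1 hji.1

lemma induce_induce (G : DiGraph) {s t : Finset ℕ} (h : t ⊆ s) :
    (G.induce s).induce t = G.induce t := by
  refine ext' rfl fun i j => ?_
  simp only [induce_E]
  constructor
  · rintro ⟨⟨he, -, -⟩, hi, hj⟩; exact ⟨he, hi, hj⟩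
  · rintro ⟨he, hi, hj⟩; exact ⟨⟨he, h hi, h hj⟩, hi, hj⟩

lemma delV_eq_induce {G : DiGraph}
    (hG : ∀ i j, G.E i j → i ∈ G.verts ∧ j ∈ G.verts) (v : ℕ) :
    G.delV v = G.induce (G.verts.erase v) := by
  refine ext' rfl fun i j => ?_
  show G.E i j ∧ i ≠ v ∧ j ≠ v ↔ _
  simp only [induce_E, Finset.mem_erase]
  constructor
  · rintro ⟨he, hi, hj⟩; exact ⟨he, ⟨hi, (hG _ _ he).1⟩, ⟨hj, (hG _ _ he).2⟩⟩
  · rintro ⟨he, ⟨hi, -⟩, ⟨hj, -⟩⟩; exact ⟨he, hi, hj⟩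

lemma induce_delV (G : DiGraph) (s : Finset ℕ) (v : ℕ) :
    (G.induce s).delV v = G.induce (s.erase v) := by
  rw [delV_eq_induce (fun i j h => (((G.induce_E s i j).1 h).2 : _ ∧ _)) v]
  exact induce_induce G (Finset.erase_subset _ _)

lemma symGraph_adj {G : DiGraph} (x y : {a // a ∈ G.verts}) :
    G.symGraph.Adj x y ↔ (G.E x.1 y.1 ∨ G.E y.1 x.1) ∧ x ≠ y := Iff.rfl

/-! ### Reachability transfer between induced subgraphs -/

lemma reach_induce_of_walk {G : DiGraph} {s : Finset ℕ} {x y : {a // a ∈ G.verts}}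
    (w : G.symGraph.Walk x y) (hs : ∀ z ∈ w.support, z.1 ∈ s) :
    ∀ (hx : x.1 ∈ s) (hy : y.1 ∈ s),
      (G.induce s).symGraph.Reachable ⟨x.1, hx⟩ ⟨y.1, hy⟩ := by
  induction w with
  | nil => intro hx hy; rfl
  | @cons a b c hadj p ih =>
    intro hx hy
    have hb : b.1 ∈ s := hs _ (by simp [SimpleGraph.Walk.support_cons])
    have hrest : ∀ z ∈ p.support, z.1 ∈ s := fun z hz =>
      hs _ (by simp [SimpleGraph.Walk.support_cons, hz])
    refine .trans (SimpleGraph.Adj.reachable ?_) (ih hrest hb hy)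
    refine ⟨?_, ?_⟩
    · rcases hadj.1 with h | h
      · exact Or.inl ⟨h, hx, hb⟩
      · exact Or.inr ⟨h, hb, hx⟩
    · intro hh
      replace hh := congrArg Subtype.val hh
      exact hadj.2 (Subtype.ext hh)

/-- Inclusion of an induced subgraph. -/
def inclusionHom (G : DiGraph) {s : Finset ℕ} (hs : s ⊆ G.verts) :
    (G.induce s).symGraph →g G.symGraph where
  toFun z := ⟨z.1, hs z.2⟩
  map_rel' := by
    rintro a b ⟨hab, hne⟩
    refine ⟨?_, ?_⟩
    · rcases hab with ⟨h1, -, -⟩ | ⟨h1, -, -⟩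
      · exact Or.inl h1
      · exact Or.inr h1
    · intro hh
      have hh' := congrArg Subtype.val hh
      simp only [] at hh'
      exact hne (Subtype.ext hh')

lemma reach_of_reach_induce {G : DiGraph} {s : Finset ℕ} (hs : s ⊆ G.verts)
    {x y : {a // a ∈ s}} (h : (G.induce s).symGraph.Reachable x y) :
    G.symGraph.Reachable ⟨x.1, hs x.2⟩ ⟨y.1, hs y.2⟩ :=
  h.map (inclusionHom G hs)

lemma reach_of_mem_support {G : DiGraph} {x y : {a // a ∈ G.verts}}
    (w : G.symGraph.Walk x y) {z : {a // a ∈ G.verts}} (hz : z ∈ w.support) :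
    G.symGraph.Reachable x z := by
  induction w with
  | nil => simp only [SimpleGraph.Walk.support_nil, List.mem_singleton] at hz; subst hz; rfl
  | @cons a b c hadj p ih =>
    rw [SimpleGraph.Walk.support_cons, List.mem_cons] at hz
    rcases hz with rfl | hz
    · rfl
    · exact (SimpleGraph.Adj.reachable hadj).trans (ih hz)

/-! ### Connected components as finsets -/

lemma mem_compVerts {G : DiGraph} {c : G.symGraph.ConnectedComponent} {x : ℕ} :
    x ∈ G.compVerts c ↔ ∃ h : x ∈ G.verts, G.symGraph.connectedComponentMk ⟨x, h⟩ = c := by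
  unfold compVerts
  rw [Finset.mem_filter]
  exact ⟨fun h => h.2, fun h => ⟨h.1, h⟩⟩

lemma compVerts_subset {G : DiGraph} (c : G.symGraph.ConnectedComponent) :
    G.compVerts c ⊆ G.verts := Finset.filter_subset _ _

lemma mem_compVerts_mk {G : DiGraph} {x : ℕ} (hx : x ∈ G.verts) :
    x ∈ G.compVerts (G.symGraph.connectedComponentMk ⟨x, hx⟩) :=
  mem_compVerts.2 ⟨hx, rfl⟩

lemma mem_compVerts_iff_reach {G : DiGraph} {x y : {a // a ∈ G.verts}} :
    y.1 ∈ G.compVerts (G.symGraph.connectedComponentMk x) ↔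
      G.symGraph.Reachable y x := by
  rw [mem_compVerts]
  constructor
  · rintro ⟨h, hc⟩
    exact (SimpleGraph.ConnectedComponent.eq).1 hc
  · intro h
    exact ⟨y.2, (SimpleGraph.ConnectedComponent.eq).2 h⟩

/-- The finset of vertex sets of the connected components. -/
noncomputable def parts (G : DiGraph) : Finset (Finset ℕ) :=
  Finset.image (fun c => G.compVerts c) Finset.univ

lemma compVerts_injective (G : DiGraph) :
    Function.Injective G.compVerts := by
  intro c c' h
  obtain ⟨x, hx⟩ := c.exists_rep
  have h1 : x.1 ∈ G.compVerts c := mem_compVerts.2 ⟨x.2, hx⟩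
  rw [h] at h1
  rw [mem_compVerts] at h1
  obtain ⟨hm, hc⟩ := h1
  rw [← hx]
  exact hc

lemma mem_parts {G : DiGraph} {s : Finset ℕ} :
    s ∈ G.parts ↔ ∃ c, G.compVerts c = s := by
  unfold parts
  simp only [Finset.mem_image, Finset.mem_univ, true_and]

lemma parts_nonempty {G : DiGraph} {s : Finset ℕ} (hs : s ∈ G.parts) : s.Nonempty := by
  obtain ⟨c, rfl⟩ := mem_parts.1 hs
  obtain ⟨x, hx⟩ := c.exists_rep
  exact ⟨x.1, mem_compVerts.2 ⟨x.2, hx⟩⟩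

lemma parts_disjoint {G : DiGraph} {s t : Finset ℕ} (hs : s ∈ G.parts)
    (ht : t ∈ G.parts) (hst : s ≠ t) : Disjoint s t := by
  obtain ⟨c, rfl⟩ := mem_parts.1 hs
  obtain ⟨d, rfl⟩ := mem_parts.1 ht
  rw [Finset.disjoint_left]
  intro x hxc hxd
  rw [mem_compVerts] at hxc hxd
  obtain ⟨h1, hc1⟩ := hxc
  obtain ⟨h2, hc2⟩ := hxd
  apply hst
  rw [← hc1, ← hc2]

lemma parts_biUnion (G : DiGraph) : G.parts.biUnion id = G.verts := by
  apply Finset.Subset.antisymm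
  · intro x hx
    rw [Finset.mem_biUnion] at hx
    obtain ⟨s, hs, hxs⟩ := hx
    obtain ⟨c, rfl⟩ := mem_parts.1 hs
    exact compVerts_subset c hxs
  · intro x hx
    rw [Finset.mem_biUnion]
    exact ⟨_, mem_parts.2 ⟨_, rfl⟩, mem_compVerts_mk hx⟩

lemma sum_parts_card (G : DiGraph) : ∑ s ∈ G.parts, s.card = G.verts.card := by
  have h := Finset.card_biUnion (s := G.parts) (t := id)
    (fun s hs t ht hst => parts_disjoint hs ht hst)
  rw [parts_biUnion G] at h
  rw [h]
  rfl

lemma finprod_component_eq_prod_parts (G : DiGraph) (f : DiGraph → ℚ) :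
    (∏ᶠ c : G.symGraph.ConnectedComponent, f (G.component c))
      = ∏ s ∈ G.parts, f (G.induce s) := by
  rw [finprod_eq_prod_of_fintype]
  unfold parts
  rw [Finset.prod_image (fun c _ c' _ h => compVerts_injective G h)]
  rfl

end DiGraph
namespace DiGraph

open Finset

/-- The vertex set of the connected component containing `x`, as a finset of `ℕ`. -/
noncomputable def pcomp (X : DiGraph) (x : ℕ) : Finset ℕ :=
  if hx : x ∈ X.verts then X.compVerts (X.symGraph.connectedComponentMk ⟨x, hx⟩) else ∅

lemma pcomp_eq_compVerts {X : DiGraph} {x : ℕ} (hx : x ∈ X.verts) :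
    X.pcomp x = X.compVerts (X.symGraph.connectedComponentMk ⟨x, hx⟩) := by
  unfold pcomp; rw [dif_pos hx]

lemma mem_pcomp {X : DiGraph} {x y : ℕ} (hx : x ∈ X.verts) :
    y ∈ X.pcomp x ↔ ∃ hy : y ∈ X.verts, X.symGraph.Reachable ⟨y, hy⟩ ⟨x, hx⟩ := by
  rw [pcomp_eq_compVerts hx, mem_compVerts]
  constructor
  · rintro ⟨h, hc⟩; exact ⟨h, SimpleGraph.ConnectedComponent.eq.1 hc⟩
  · rintro ⟨h, hr⟩; exact ⟨h, SimpleGraph.ConnectedComponent.eq.2 hr⟩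

lemma pcomp_subset (X : DiGraph) (x : ℕ) : X.pcomp x ⊆ X.verts := by
  unfold pcomp
  by_cases hx : x ∈ X.verts
  · rw [dif_pos hx]; exact compVerts_subset _
  · rw [dif_neg hx]; exact Finset.empty_subset _

lemma mem_pcomp_self {X : DiGraph} {x : ℕ} (hx : x ∈ X.verts) : x ∈ X.pcomp x :=
  (mem_pcomp hx).2 ⟨hx, .refl _⟩

lemma pcomp_eq_of_mem {X : DiGraph} {x y : ℕ} (hx : x ∈ X.verts)
    (hy : y ∈ X.pcomp x) : X.pcomp y = X.pcomp x := by
  obtain ⟨hy', hr⟩ := (mem_pcomp hx).1 hy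
  ext z
  rw [mem_pcomp hx, mem_pcomp hy']
  constructor
  · rintro ⟨hz, h⟩; exact ⟨hz, h.trans hr⟩
  · rintro ⟨hz, h⟩; exact ⟨hz, h.trans hr.symm⟩

lemma reach_congr {A B : DiGraph} (h : A = B) {x y : ℕ} {hx : x ∈ A.verts}
    {hy : y ∈ A.verts} (hx' : x ∈ B.verts) (hy' : y ∈ B.verts)
    (hr : A.symGraph.Reachable ⟨x, hx⟩ ⟨y, hy⟩) :
    B.symGraph.Reachable ⟨x, hx'⟩ ⟨y, hy'⟩ := by subst h; exact hr

lemma conn_congr {A B : DiGraph} (h : A = B) (hc : A.symGraph.Connected) :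
    B.symGraph.Connected := by subst h; exact hc

lemma mem_parts' {X : DiGraph} {t : Finset ℕ} :
    t ∈ X.parts ↔ ∃ x, ∃ hx : x ∈ X.verts, t = X.pcomp x := by
  rw [mem_parts]
  constructor
  · rintro ⟨c, rfl⟩
    obtain ⟨z, hz⟩ := c.exists_rep
    refine ⟨z.1, z.2, ?_⟩
    rw [pcomp_eq_compVerts z.2]
    congr 1
    rw [← hz]
    rfl
  · rintro ⟨x, hx, rfl⟩
    exact ⟨_, (pcomp_eq_compVerts hx).symm⟩

/-! ### Transfer of components under deleting a vertex -/

section Erase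

variable {H : DiGraph} {v : ℕ}

/-- Components away from the component of `v` are unchanged when `v` is deleted. -/
lemma pcomp_erase_of_not_mem (hv : v ∈ H.verts) {x : ℕ} (hx : x ∈ H.verts)
    (hxv : x ∉ H.pcomp v) :
    (H.induce (H.verts.erase v)).pcomp x = H.pcomp x := by
  have hxne : x ≠ v := fun h => hxv (by rw [h]; exact mem_pcomp_self hv)
  have hx' : x ∈ H.verts.erase v := Finset.mem_erase.2 ⟨hxne, hx⟩
  ext y
  rw [mem_pcomp (X := H.induce (H.verts.erase v)) (show x ∈ _ from hx'), mem_pcomp hx]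
  constructor
  · rintro ⟨hy', hr⟩
    have := reach_of_reach_induce (Finset.erase_subset _ _) hr
    exact ⟨Finset.mem_of_mem_erase hy', this⟩
  · rintro ⟨hy, hr⟩
    obtain ⟨w⟩ := hr
    have hsupp : ∀ z ∈ w.support, z.1 ∈ H.verts.erase v := by
      intro z hz
      have hz2 : z ∈ w.reverse.support := by
        rw [SimpleGraph.Walk.support_reverse]; exact List.mem_reverse.2 hz
      have hrz : H.symGraph.Reachable ⟨x, hx⟩ z := reach_of_mem_support w.reverse hz2
      refine Finset.mem_erase.2 ⟨?_, z.2⟩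
      intro hzv
      apply hxv
      rw [mem_pcomp hv]
      refine ⟨hx, ?_⟩
      have : z = ⟨v, hv⟩ := Subtype.ext hzv
      rw [this] at hrz
      exact hrz
    have hyv : y ∈ H.verts.erase v := hsupp _ w.start_mem_support
    exact ⟨hyv, reach_induce_of_walk w hsupp hyv hx'⟩

/-- Components inside the component of `v` become components of that component minus `v`. -/
lemma pcomp_erase_of_mem (hv : v ∈ H.verts) {x : ℕ}
    (hx : x ∈ (H.pcomp v).erase v) :
    (H.induce (H.verts.erase v)).pcomp x = (H.induce ((H.pcomp v).erase v)).pcomp x := by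
  have hxv : x ≠ v := (Finset.mem_erase.1 hx).1
  have hxC : x ∈ H.pcomp v := (Finset.mem_erase.1 hx).2
  have hxverts : x ∈ H.verts := pcomp_subset H v hxC
  have hx' : x ∈ H.verts.erase v := Finset.mem_erase.2 ⟨hxv, hxverts⟩
  have hsub : (H.pcomp v).erase v ⊆ H.verts.erase v :=
    Finset.erase_subset_erase v (pcomp_subset H v)
  have hgraph : (H.induce (H.verts.erase v)).induce ((H.pcomp v).erase v)
      = H.induce ((H.pcomp v).erase v) := induce_induce H hsub
  have hrx : H.symGraph.Reachable ⟨x, hxverts⟩ ⟨v, hv⟩ := by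
    obtain ⟨h1, h2⟩ := (mem_pcomp hv).1 hxC
    exact h2
  ext y
  rw [mem_pcomp (X := H.induce (H.verts.erase v)) (show x ∈ _ from hx'),
    mem_pcomp (X := H.induce ((H.pcomp v).erase v)) (show x ∈ _ from hx)]
  constructor
  · rintro ⟨hy', hr⟩
    obtain ⟨w⟩ := hr
    have hsupp : ∀ z ∈ w.support, z.1 ∈ (H.pcomp v).erase v := by
      intro z hz
      have hz2 : z ∈ w.reverse.support := by
        rw [SimpleGraph.Walk.support_reverse]; exact List.mem_reverse.2 hz
      have hrz := reach_of_mem_support w.reverse hz2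
      -- hrz : Reachable (induce erase) ⟨x,hx'⟩ z
      have hrz' := reach_of_reach_induce (Finset.erase_subset _ _) hrz
      refine Finset.mem_erase.2 ⟨(Finset.mem_erase.1 z.2).1, ?_⟩
      rw [mem_pcomp hv]
      exact ⟨(Finset.mem_erase.1 z.2).2, hrz'.symm.trans hrx⟩
    have hyC : y ∈ (H.pcomp v).erase v := hsupp _ w.start_mem_support
    have h2 := reach_induce_of_walk w hsupp hyC hx
    exact ⟨hyC, reach_congr hgraph hyC hx h2⟩
  · rintro ⟨hy', hr⟩
    have hr' := reach_congr hgraph.symm hy' hx hr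
    have h2 := reach_of_reach_induce hsub hr'
    exact ⟨hsub hy', h2⟩

/-- Decomposition of the component structure upon deleting a vertex. -/
lemma parts_induce_erase (hv : v ∈ H.verts) :
    (H.induce (H.verts.erase v)).parts
      = (H.parts.erase (H.pcomp v)) ∪ (H.induce ((H.pcomp v).erase v)).parts := by
  ext t
  rw [Finset.mem_union, mem_parts', Finset.mem_erase, mem_parts', mem_parts']
  constructor
  · rintro ⟨x, hx', rfl⟩
    have hxv : x ≠ v := (Finset.mem_erase.1 hx').1
    have hx : x ∈ H.verts := (Finset.mem_erase.1 hx').2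
    by_cases hxC : x ∈ H.pcomp v
    · right
      exact ⟨x, Finset.mem_erase.2 ⟨hxv, hxC⟩,
        pcomp_erase_of_mem hv (Finset.mem_erase.2 ⟨hxv, hxC⟩)⟩
    · left
      rw [pcomp_erase_of_not_mem hv hx hxC]
      refine ⟨?_, x, hx, rfl⟩
      intro h
      exact hxC (h ▸ mem_pcomp_self hx)
  · rintro (⟨hne, x, hx, rfl⟩ | ⟨x, hx, rfl⟩)
    · have hxC : x ∉ H.pcomp v := by
        intro h
        exact hne (pcomp_eq_of_mem hv h)
      refine ⟨x, Finset.mem_erase.2 ⟨fun h => hxC (by rw [h]; exact mem_pcomp_self hv), hx⟩, ?_⟩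
      rw [pcomp_erase_of_not_mem hv hx hxC]
    · refine ⟨x, ?_, ?_⟩
      · exact Finset.mem_erase.2 ⟨(Finset.mem_erase.1 hx).1,
          pcomp_subset H v (Finset.mem_erase.1 hx).2⟩
      · rw [pcomp_erase_of_mem hv hx]

lemma parts_induce_erase_disjoint (hv : v ∈ H.verts) :
    Disjoint (H.parts.erase (H.pcomp v)) (H.induce ((H.pcomp v).erase v)).parts := by
  rw [Finset.disjoint_left]
  rintro t ht ht'
  rw [Finset.mem_erase, mem_parts'] at ht
  obtain ⟨hne, x, hx, rfl⟩ := ht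
  rw [mem_parts'] at ht'
  obtain ⟨y, hy, heq⟩ := ht'
  have hy0 : y ∈ (H.induce ((H.pcomp v).erase v)).verts := hy
  have hy1 : y ∈ H.pcomp x := by
    rw [heq]
    exact mem_pcomp_self hy
  have hy2 : y ∈ H.pcomp v := (Finset.mem_erase.1 hy0).2
  apply hne
  rw [← pcomp_eq_of_mem hx hy1, pcomp_eq_of_mem hv hy2]

end Erase

/-! ### Components are connected; induced subgraphs of trees are acyclic -/

lemma part_connected {H : DiGraph} {t : Finset ℕ} (ht : t ∈ H.parts) :
    (H.induce t).symGraph.Connected := by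
  obtain ⟨x, hx, rfl⟩ := mem_parts'.1 ht
  have hne : Nonempty {a // a ∈ (H.induce (H.pcomp x)).verts} :=
    ⟨⟨x, mem_pcomp_self hx⟩⟩
  refine SimpleGraph.Connected.mk ?_
  intro y z
  obtain ⟨hy, hry⟩ := (mem_pcomp hx).1 y.2
  obtain ⟨hz, hrz⟩ := (mem_pcomp hx).1 z.2
  obtain ⟨w⟩ := hry.trans hrz.symm
  have hsupp : ∀ u ∈ w.support, u.1 ∈ H.pcomp x := by
    intro u hu
    have := reach_of_mem_support w hu
    rw [mem_pcomp hx]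
    exact ⟨u.2, this.symm.trans hry⟩
  have := reach_induce_of_walk w hsupp y.2 z.2
  exact this

lemma induce_acyclic {G : DiGraph} {s : Finset ℕ} (hs : s ⊆ G.verts)
    (h : G.symGraph.IsAcyclic) : (G.induce s).symGraph.IsAcyclic := by
  intro u c hc
  have hinj : Function.Injective (inclusionHom G hs) := by
    intro a b hab
    have := congrArg Subtype.val hab
    exact Subtype.ext this
  exact h (c.map (inclusionHom G hs))
    ((SimpleGraph.Walk.map_isCycle_iff_of_injective hinj).2 hc)

lemma isOTree_of_connected_induce {T : DiGraph} (hT : T.IsOTree) {t : Finset ℕ}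
    (ht : t ⊆ T.verts) (hconn : (T.induce t).symGraph.Connected) :
    (T.induce t).IsOTree := by
  refine ⟨fun i j h => ⟨h.2.1, h.2.2⟩, fun i j h h' => hT.2.1 i j h.1 h'.1, hconn, ?_⟩
  exact induce_acyclic ht hT.2.2.2

lemma otree_parts {G : DiGraph} (hG : G.IsOTree) {t : Finset ℕ} (ht : t ∈ G.parts) :
    (G.induce t).IsOTree := by
  obtain ⟨x, hx, rfl⟩ := mem_parts'.1 ht
  have hall : G.pcomp x = G.verts := by
    apply Finset.Subset.antisymm (pcomp_subset G x)
    intro y hy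
    rw [mem_pcomp hx]
    exact ⟨hy, hG.2.2.1.preconnected _ _⟩
  have hind : G.induce G.verts = G := by
    refine ext' rfl fun i j => ?_
    simp only [induce_E]
    exact ⟨fun h => h.1, fun h => ⟨h, (hG.1 i j h).1, (hG.1 i j h).2⟩⟩
  rw [hall, hind]
  exact hG

/-- key propagation: components of an induced subgraph of a "forest" are subtrees -/
lemma induce_part_isOTree {H : DiGraph} (hparts : ∀ t ∈ H.parts, (H.induce t).IsOTree)
    {s : Finset ℕ} (hs : s ⊆ H.verts) {t : Finset ℕ} (ht : t ∈ (H.induce s).parts) :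
    (H.induce t).IsOTree := by
  have hconn : (H.induce t).symGraph.Connected := by
    have h1 := part_connected ht
    obtain ⟨x, hx, rfl⟩ := mem_parts'.1 ht
    exact conn_congr (induce_induce H (pcomp_subset (H.induce s) x)) h1
  obtain ⟨x, hx, rfl⟩ := mem_parts'.1 ht
  set t := (H.induce s).pcomp x with hts
  have hxs : x ∈ s := hx
  have hxverts : x ∈ H.verts := hs hx
  have htC : t ⊆ H.pcomp x := by
    intro y hy
    obtain ⟨hy', hr⟩ := (mem_pcomp (X := H.induce s) hx).1 hy
    have := reach_of_reach_induce hs hr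
    rw [mem_pcomp hxverts]
    exact ⟨hs hy', this⟩
  have hCparts : H.pcomp x ∈ H.parts := mem_parts'.2 ⟨x, hxverts, rfl⟩
  have hT := hparts _ hCparts
  have heq : H.induce t = (H.induce (H.pcomp x)).induce t :=
    (induce_induce H htC).symm
  rw [heq]
  refine isOTree_of_connected_induce hT htC ?_
  rw [← heq]
  exact hconn

lemma inDeg_induce_pcomp {H : DiGraph} (hH : H.Good) {v : ℕ} (hv : v ∈ H.verts) :
    (H.induce (H.pcomp v)).inDeg v = H.inDeg v := by
  unfold inDeg
  congr 1
  ext u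
  simp only [Finset.mem_filter, induce_verts, induce_E]
  constructor
  · rintro ⟨hu, he, -, -⟩
    exact ⟨pcomp_subset H v hu, he⟩
  · rintro ⟨hu, he⟩
    have huv : u ≠ v := hH.ne he
    have hadj : H.symGraph.Adj ⟨u, hu⟩ ⟨v, hv⟩ :=
      ⟨Or.inl he, fun h => huv (congrArg Subtype.val h)⟩
    have humem : u ∈ H.pcomp v := (mem_pcomp hv).2 ⟨hu, hadj.reachable⟩
    exact ⟨humem, he, humem, mem_pcomp_self hv⟩

end DiGraph
namespace DiGraph

open Finset

/-- The finset of oriented edges of `G`. -/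
noncomputable def Ep (G : DiGraph) : Finset (ℕ × ℕ) :=
  (G.verts ×ˢ G.verts).filter fun p => G.E p.1 p.2

lemma mem_Ep {G : DiGraph} {p : ℕ × ℕ} :
    p ∈ G.Ep ↔ p.1 ∈ G.verts ∧ p.2 ∈ G.verts ∧ G.E p.1 p.2 := by
  unfold Ep
  rw [Finset.mem_filter, Finset.mem_product]
  tauto

lemma card_Ep_of_isOTree {G : DiGraph} (hG : G.IsOTree) :
    G.Ep.card + 1 = G.verts.card := by
  have h1 := SimpleGraph.IsTree.card_edgeFinset hG.2.2
  rw [Fintype.card_coe] at h1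
  have h2 : G.Ep.card = G.symGraph.edgeFinset.card := by
    refine Finset.card_bij
      (fun p hp => s(⟨p.1, (mem_Ep.1 hp).1⟩, ⟨p.2, (mem_Ep.1 hp).2.1⟩)) ?_ ?_ ?_
    · intro p hp
      rw [SimpleGraph.mem_edgeFinset, SimpleGraph.mem_edgeSet]
      obtain ⟨h1', h2', h3'⟩ := mem_Ep.1 hp
      refine ⟨Or.inl h3', ?_⟩
      intro hh
      exact hG.good.ne h3' (congrArg Subtype.val hh)
    · intro p hp q hq hpq
      rw [Sym2.eq_iff] at hpq
      obtain ⟨hp1, hp2, hp3⟩ := mem_Ep.1 hp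
      obtain ⟨hq1, hq2, hq3⟩ := mem_Ep.1 hq
      rcases hpq with ⟨h1', h2'⟩ | ⟨h1', h2'⟩
      · have e1 : p.1 = q.1 := congrArg Subtype.val h1'
        have e2 : p.2 = q.2 := congrArg Subtype.val h2'
        exact Prod.ext e1 e2
      · have e1 : p.1 = q.2 := congrArg Subtype.val h1'
        have e2 : p.2 = q.1 := congrArg Subtype.val h2'
        rw [e1, e2] at hp3
        exact absurd hq3 (hG.2.1 _ _ hp3)
    · intro e he
      induction e with
      | _ a b =>
        rw [SimpleGraph.mem_edgeFinset, SimpleGraph.mem_edgeSet] at he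
        obtain ⟨hab, hne⟩ := he
        rcases hab with h | h
        · refine ⟨(a.1, b.1), mem_Ep.2 ⟨a.2, b.2, h⟩, ?_⟩
          rfl
        · refine ⟨(b.1, a.1), mem_Ep.2 ⟨b.2, a.2, h⟩, ?_⟩
          exact Sym2.eq_swap
  omega

/-- The rank of a vertex under a linear-order bijection. -/
noncomputable def rk (G : DiGraph) (σ : {x // x ∈ G.verts} ≃ Fin G.verts.card) (x : ℕ) : ℕ :=
  if h : x ∈ G.verts then (σ ⟨x, h⟩ : ℕ) else 0

/-- The sign-weight of a linear order on the vertices. -/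
noncomputable def wt (G : DiGraph) (σ : {x // x ∈ G.verts} ≃ Fin G.verts.card) : ℚ :=
  ∏ p ∈ G.Ep, (if G.rk σ p.1 < G.rk σ p.2 then (1 : ℚ) else -1)

/-- The signed count of linear orders on the vertices, weighted by edge ascents/descents. -/
noncomputable def W (G : DiGraph) : ℚ :=
  ∑ σ : {x // x ∈ G.verts} ≃ Fin G.verts.card, G.wt σ

lemma W_of_Ep_empty {G : DiGraph} (h : G.Ep = ∅) :
    G.W = Nat.factorial G.verts.card := by
  unfold W wt
  rw [h]
  simp only [Finset.prod_empty]
  rw [Finset.sum_const, Finset.card_univ, nsmul_eq_mul, mul_one]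
  rw [Fintype.card_equiv (Fintype.equivFinOfCardEq (Fintype.card_coe _)), Fintype.card_coe]

lemma rk_ne {G : DiGraph} (σ : {x // x ∈ G.verts} ≃ Fin G.verts.card)
    {x y : ℕ} (hx : x ∈ G.verts) (hy : y ∈ G.verts) (hxy : x ≠ y) :
    G.rk σ x ≠ G.rk σ y := by
  unfold rk
  rw [dif_pos hx, dif_pos hy]
  intro h
  have h2 : σ ⟨x, hx⟩ = σ ⟨y, hy⟩ := Fin.ext h
  have := σ.injective h2
  exact hxy (congrArg Subtype.val this)

/-- reversing a linear order -/
private def revE (G : DiGraph) : ({x // x ∈ G.verts} ≃ Fin G.verts.card) ≃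
    ({x // x ∈ G.verts} ≃ Fin G.verts.card) :=
  ⟨fun σ => σ.trans Fin.revPerm, fun σ => σ.trans Fin.revPerm,
    fun σ => by ext x; simp [Fin.rev_rev], fun σ => by ext x; simp [Fin.rev_rev]⟩

lemma W_eq_zero_of_even {G : DiGraph} (hG : G.IsOTree) (heven : Even G.verts.card) :
    G.W = 0 := by
  have hodd : ¬ Even G.Ep.card := by
    have h1 := card_Ep_of_isOTree hG
    have h2 : 1 ≤ G.verts.card := by
      have := hG.2.2.1.nonempty
      obtain ⟨x⟩ := this
      exact Finset.card_pos.2 ⟨x.1, x.2⟩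
    rcases heven with ⟨k, hk⟩
    rintro ⟨l, hl⟩
    omega
  have key : ∀ σ : {x // x ∈ G.verts} ≃ Fin G.verts.card,
      G.wt (σ.trans (Fin.revPerm)) = - G.wt σ := by
    intro σ
    unfold wt
    have hfac : ∀ p ∈ G.Ep,
        (if G.rk (σ.trans Fin.revPerm) p.1 < G.rk (σ.trans Fin.revPerm) p.2
          then (1:ℚ) else -1)
        = -(if G.rk σ p.1 < G.rk σ p.2 then (1:ℚ) else -1) := by
      intro p hp
      obtain ⟨h1, h2, h3⟩ := mem_Ep.1 hp
      have hne := rk_ne σ h1 h2 (hG.good.ne h3)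
      unfold rk
      rw [dif_pos h1, dif_pos h2, dif_pos h1, dif_pos h2]
      unfold rk at hne
      rw [dif_pos h1, dif_pos h2] at hne
      simp only [Equiv.trans_apply, Fin.revPerm_apply]
      have hr : (Fin.rev (σ ⟨p.1, h1⟩) : ℕ) < (Fin.rev (σ ⟨p.2, h2⟩) : ℕ)
          ↔ (σ ⟨p.2, h2⟩ : ℕ) < (σ ⟨p.1, h1⟩ : ℕ) := by
        rw [← Fin.lt_iff_val_lt_val, ← Fin.lt_iff_val_lt_val, Fin.rev_lt_rev]
      by_cases hlt : (σ ⟨p.1, h1⟩ : ℕ) < (σ ⟨p.2, h2⟩ : ℕ)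
      · have hno : ¬ ((Fin.rev (σ ⟨p.1, h1⟩) : ℕ) < (Fin.rev (σ ⟨p.2, h2⟩) : ℕ)) := by
          rw [hr]; omega
        rw [if_pos hlt, if_neg hno]
        try ring
      · have hyes : (Fin.rev (σ ⟨p.1, h1⟩) : ℕ) < (Fin.rev (σ ⟨p.2, h2⟩) : ℕ) := by
          rw [hr]; omega
        rw [if_neg hlt, if_pos hyes]
        try ring
    rw [Finset.prod_congr rfl hfac]
    have hneg : (∏ x ∈ G.Ep, -(if G.rk σ x.1 < G.rk σ x.2 then (1:ℚ) else -1))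
        = (∏ _x ∈ G.Ep, (-1 : ℚ)) *
          ∏ x ∈ G.Ep, (if G.rk σ x.1 < G.rk σ x.2 then (1:ℚ) else -1) := by
      rw [← Finset.prod_mul_distrib]
      exact Finset.prod_congr rfl fun x _ => by ring
    rw [hneg, Finset.prod_const]
    rcases Nat.even_or_odd G.Ep.card with h | h
    · exact absurd h hodd
    · rw [Odd.neg_one_pow h]
      ring
  have hW : G.W = - G.W := by
    conv_lhs => rw [W]
    rw [← Equiv.sum_comp (revE G) (fun σ => G.wt σ)]
    have hterm : ∀ σ, G.wt (revE G σ) = - G.wt σ := fun σ => key σ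
    rw [Finset.sum_congr rfl fun σ _ => hterm σ, Finset.sum_neg_distrib]
    rfl
  linarith

end DiGraph
namespace DiGraph

open Finset

section MinExpand

variable {G : DiGraph} {v : ℕ}

/-- Splitting off the vertex `v` from the vertex subtype. -/
private def vOpt (G : DiGraph) {v : ℕ} (hv : v ∈ G.verts) :
    {x // x ∈ G.verts} ≃ Option {x // x ∈ G.verts.erase v} where
  toFun x := if h : x.1 = v then none else some ⟨x.1, Finset.mem_erase.2 ⟨h, x.2⟩⟩
  invFun o := o.elim ⟨v, hv⟩ (fun y => ⟨y.1, Finset.mem_of_mem_erase y.2⟩)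
  left_inv x := by
    rcases x with ⟨x, hx⟩
    by_cases h : x = v
    · subst h; simp
    · simp [h]
  right_inv o := by
    cases o with
    | none => simp
    | some y =>
      simp only [Option.elim]
      have := (Finset.mem_erase.1 y.2).1
      simp [this]

/-- Splitting off the bottom element of `Fin n`. -/
private def fOpt {m n : ℕ} (hm : m + 1 = n) : Option (Fin m) ≃ Fin n where
  toFun o := o.elim ⟨0, by omega⟩ (fun j => ⟨j.1 + 1, by omega⟩)
  invFun i := if h : i.1 = 0 then none else some ⟨i.1 - 1, by omega⟩
  left_inv o := by
    cases o with
    | none => simp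
    | some j => simp
  right_inv i := by
    by_cases h : i.1 = 0
    · simp only [h]
      simp only [Option.elim]
      exact Fin.ext (by simp [h])
    · simp only [dif_neg h, Option.elim]
      exact Fin.ext (by simp; omega)

variable (hv : v ∈ G.verts) (hm : (G.delV v).verts.card + 1 = G.verts.card)

/-- Building a linear order on `G` from one on `G∖v` by putting `v` first. -/
private noncomputable def Phi (τ : {x // x ∈ (G.delV v).verts} ≃ Fin (G.delV v).verts.card) :
    {x // x ∈ G.verts} ≃ Fin G.verts.card :=
  ((vOpt G hv).trans τ.optionCongr).trans (fOpt hm)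

private lemma Phi_v (τ : {x // x ∈ (G.delV v).verts} ≃ Fin (G.delV v).verts.card) :
    (Phi hv hm τ ⟨v, hv⟩ : ℕ) = 0 := by
  unfold Phi
  simp only [Equiv.trans_apply]
  rw [show ((vOpt G hv).trans τ.optionCongr) ⟨v, hv⟩ = τ.optionCongr none from
    congrArg (⇑τ.optionCongr) (dif_pos rfl : vOpt G hv ⟨v, hv⟩ = none)]
  rfl

private lemma Phi_ne (τ : {x // x ∈ (G.delV v).verts} ≃ Fin (G.delV v).verts.card)
    {x : ℕ} (hx : x ∈ G.verts) (hx' : x ∈ G.verts.erase v) :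
    (Phi hv hm τ ⟨x, hx⟩ : ℕ) = (τ ⟨x, hx'⟩ : ℕ) + 1 := by
  unfold Phi
  simp only [Equiv.trans_apply]
  rw [show ((vOpt G hv).trans τ.optionCongr) ⟨x, hx⟩ = τ.optionCongr (some ⟨x, hx'⟩) from
    congrArg (⇑τ.optionCongr)
      (dif_neg (Finset.mem_erase.1 hx').1 : vOpt G hv ⟨x, hx⟩ = some ⟨x, hx'⟩)]
  rfl

private lemma rk_Phi_v (τ : {x // x ∈ (G.delV v).verts} ≃ Fin (G.delV v).verts.card) :
    G.rk (Phi hv hm τ) v = 0 := by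
  unfold rk
  rw [dif_pos hv]
  exact Phi_v hv hm τ

private lemma rk_Phi_ne (τ : {x // x ∈ (G.delV v).verts} ≃ Fin (G.delV v).verts.card)
    {x : ℕ} (hx' : x ∈ G.verts.erase v) :
    G.rk (Phi hv hm τ) x = (G.delV v).rk τ x + 1 := by
  unfold rk
  rw [dif_pos (Finset.mem_of_mem_erase hx'), dif_pos (show x ∈ (G.delV v).verts from hx')]
  exact Phi_ne hv hm τ _ hx'

/-- weight of an order with `v` first -/
private lemma wt_Phi (hG : G.Good)
    (τ : {x // x ∈ (G.delV v).verts} ≃ Fin (G.delV v).verts.card) :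
    G.wt (Phi hv hm τ) = (-1 : ℚ) ^ (G.inDeg v) * (G.delV v).wt τ := by
  unfold wt
  rw [← Finset.prod_filter_mul_prod_filter_not G.Ep (fun p => p.2 = v)]
  rw [← Finset.prod_filter_mul_prod_filter_not (G.Ep.filter (fun p => ¬ p.2 = v))
    (fun p => p.1 = v)]
  have hA : ∀ p ∈ G.Ep.filter (fun p => p.2 = v),
      (if G.rk (Phi hv hm τ) p.1 < G.rk (Phi hv hm τ) p.2 then (1:ℚ) else -1) = -1 := by
    intro p hp
    rw [Finset.mem_filter] at hp
    obtain ⟨hp1, hp2⟩ := hp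
    obtain ⟨q1, q2, q3⟩ := mem_Ep.1 hp1
    have hne : p.1 ≠ v := by
      intro h; rw [h, hp2] at q3; exact hG.ne q3 rfl
    rw [hp2, rk_Phi_v hv hm τ, rk_Phi_ne hv hm τ (Finset.mem_erase.2 ⟨hne, q1⟩)]
    rw [if_neg (by omega)]
  have hcardA : (G.Ep.filter (fun p => p.2 = v)).card = G.inDeg v := by
    unfold inDeg
    refine Finset.card_bij (fun p _ => p.1) ?_ ?_ ?_
    · intro p hp
      rw [Finset.mem_filter] at hp ⊢
      obtain ⟨q1, q2, q3⟩ := mem_Ep.1 hp.1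
      exact ⟨q1, hp.2 ▸ q3⟩
    · intro p hp q hq h
      rw [Finset.mem_filter] at hp hq
      exact Prod.ext h (hp.2.trans hq.2.symm)
    · intro u hu
      rw [Finset.mem_filter] at hu
      exact ⟨(u, v), Finset.mem_filter.2 ⟨mem_Ep.2 ⟨hu.1, hv, hu.2⟩, rfl⟩, rfl⟩
  have hB : ∀ p ∈ (G.Ep.filter (fun p => ¬ p.2 = v)).filter (fun p => p.1 = v),
      (if G.rk (Phi hv hm τ) p.1 < G.rk (Phi hv hm τ) p.2 then (1:ℚ) else -1) = 1 := by
    intro p hp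
    rw [Finset.mem_filter, Finset.mem_filter] at hp
    obtain ⟨⟨hp1, hp2⟩, hp3⟩ := hp
    obtain ⟨q1, q2, q3⟩ := mem_Ep.1 hp1
    rw [hp3, rk_Phi_v hv hm τ, rk_Phi_ne hv hm τ (Finset.mem_erase.2 ⟨hp2, q2⟩)]
    rw [if_pos (by omega)]
  have hCset : (G.Ep.filter (fun p => ¬ p.2 = v)).filter (fun p => ¬ p.1 = v)
      = (G.delV v).Ep := by
    ext p
    rw [Finset.mem_filter, Finset.mem_filter, mem_Ep, mem_Ep]
    show _ ↔ p.1 ∈ G.verts.erase v ∧ p.2 ∈ G.verts.erase v ∧ (G.E p.1 p.2 ∧ _ ∧ _)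
    rw [Finset.mem_erase, Finset.mem_erase]
    tauto
  have hC : ∀ p ∈ (G.delV v).Ep,
      (if G.rk (Phi hv hm τ) p.1 < G.rk (Phi hv hm τ) p.2 then (1:ℚ) else -1)
      = (if (G.delV v).rk τ p.1 < (G.delV v).rk τ p.2 then (1:ℚ) else -1) := by
    intro p hp
    obtain ⟨q1, q2, q3⟩ := mem_Ep.1 hp
    rw [rk_Phi_ne hv hm τ q1, rk_Phi_ne hv hm τ q2]
    exact if_congr (by omega) rfl rfl
  rw [Finset.prod_congr rfl hA, Finset.prod_congr rfl hB, hCset,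
    Finset.prod_congr rfl hC, Finset.prod_const, Finset.prod_const, hcardA]
  rw [one_pow, one_mul]

/-- inverse construction -/
private noncomputable def Psi (σ : {x // x ∈ G.verts} ≃ Fin G.verts.card) :
    {x // x ∈ (G.delV v).verts} ≃ Fin (G.delV v).verts.card :=
  Equiv.removeNone (((vOpt G hv).symm.trans σ).trans (fOpt hm).symm)

private lemma Psi_Phi (τ : {x // x ∈ (G.delV v).verts} ≃ Fin (G.delV v).verts.card) :
    Psi hv hm (Phi hv hm τ) = τ := by
  refine Equiv.ext fun y => Option.some_injective _ ?_
  have hO : (((vOpt G hv).symm.trans (Phi hv hm τ)).trans (fOpt hm).symm) (some y)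
      = some (τ y) := by
    simp only [Equiv.trans_apply]
    have h1 : (vOpt G hv).symm (some y) = ⟨y.1, Finset.mem_of_mem_erase y.2⟩ := rfl
    rw [h1]
    have h2 : Phi hv hm τ ⟨y.1, Finset.mem_of_mem_erase y.2⟩ = fOpt hm (some (τ y)) := by
      unfold Phi
      simp only [Equiv.trans_apply]
      rw [show ((vOpt G hv).trans τ.optionCongr) ⟨y.1, Finset.mem_of_mem_erase y.2⟩
          = τ.optionCongr (some y) from congrArg (⇑τ.optionCongr)
        (dif_neg (Finset.mem_erase.1 y.2).1 : vOpt G hv ⟨y.1, Finset.mem_of_mem_erase y.2⟩ = some y)]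
      rfl
    rw [h2, Equiv.symm_apply_apply]
  have key := Equiv.removeNone_some
    (((vOpt G hv).symm.trans (Phi hv hm τ)).trans (fOpt hm).symm) ⟨τ y, hO⟩
  show some (Psi hv hm (Phi hv hm τ) y) = some (τ y)
  unfold Psi
  exact key.trans hO

private lemma Phi_Psi (σ : {x // x ∈ G.verts} ≃ Fin G.verts.card)
    (hσ : σ ⟨v, hv⟩ = ⟨0, by omega⟩) :
    Phi hv hm (Psi hv hm σ) = σ := by
  have hOnone : (((vOpt G hv).symm.trans σ).trans (fOpt hm).symm) none = none := by
    simp only [Equiv.trans_apply]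
    have h1 : (vOpt G hv).symm none = ⟨v, hv⟩ := rfl
    rw [h1, hσ]
    unfold fOpt
    simp
    rfl
  refine Equiv.ext fun x => ?_
  by_cases hx : x.1 = v
  · have hxv : x = ⟨v, hv⟩ := Subtype.ext hx
    rw [hxv, hσ]
    exact Fin.ext (Phi_v hv hm _)
  · have hx' : x.1 ∈ G.verts.erase v := Finset.mem_erase.2 ⟨hx, x.2⟩
    have hex : ∃ b, (((vOpt G hv).symm.trans σ).trans (fOpt hm).symm) (some ⟨x.1, hx'⟩)
        = some b := by
      rcases Option.eq_none_or_eq_some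
        ((((vOpt G hv).symm.trans σ).trans (fOpt hm).symm) (some ⟨x.1, hx'⟩)) with h | h
      · exfalso
        have := (((vOpt G hv).symm.trans σ).trans (fOpt hm).symm).injective
          (h.trans hOnone.symm)
        exact Option.some_ne_none _ this
      · exact h
    have key := Equiv.removeNone_some (((vOpt G hv).symm.trans σ).trans (fOpt hm).symm) hex
    have h2 : Phi hv hm (Psi hv hm σ) x = fOpt hm (some ((Psi hv hm σ) ⟨x.1, hx'⟩)) := by
      unfold Phi
      simp only [Equiv.trans_apply]
      rw [show ((vOpt G hv).trans (Psi hv hm σ).optionCongr) x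
          = (Psi hv hm σ).optionCongr (some ⟨x.1, hx'⟩) from
        congrArg (⇑(Psi hv hm σ).optionCongr) (dif_neg hx : vOpt G hv x = some ⟨x.1, hx'⟩)]
      rfl
    rw [h2]
    have h3 : some ((Psi hv hm σ) ⟨x.1, hx'⟩)
        = (((vOpt G hv).symm.trans σ).trans (fOpt hm).symm) (some ⟨x.1, hx'⟩) := key
    rw [h3]
    simp only [Equiv.trans_apply]
    rw [Equiv.apply_symm_apply]
    exact congrArg σ (Subtype.ext rfl)

/-- Conditioning on the minimum of the linear order. -/
lemma W_min_expand (hG : G.Good) (hn : 1 ≤ G.verts.card) :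
    G.W = ∑ v ∈ G.verts, (-1 : ℚ) ^ (G.inDeg v) * (G.delV v).W := by
  have hmaps : ∀ σ : {x // x ∈ G.verts} ≃ Fin G.verts.card, σ ∈ (Finset.univ : Finset _) →
      ((σ.symm ⟨0, hn⟩).1 : ℕ) ∈ G.verts := fun σ _ => (σ.symm ⟨0, hn⟩).2
  rw [W, ← Finset.sum_fiberwise_of_maps_to hmaps (fun σ => G.wt σ)]
  refine Finset.sum_congr rfl fun v hv => ?_
  have hm : (G.delV v).verts.card + 1 = G.verts.card := by
    show (G.verts.erase v).card + 1 = _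
    exact Finset.card_erase_add_one hv
  rw [W, Finset.mul_sum]
  refine Finset.sum_nbij' (fun σ => Psi hv hm σ) (fun τ => Phi hv hm τ) ?_ ?_ ?_ ?_ ?_
  · intro σ _; exact Finset.mem_univ _
  · intro τ _
    rw [Finset.mem_filter]
    refine ⟨Finset.mem_univ _, ?_⟩
    have h0 : Phi hv hm τ ⟨v, hv⟩ = ⟨0, hn⟩ := Fin.ext (Phi_v hv hm τ)
    have := (Equiv.symm_apply_eq (Phi hv hm τ)).2 h0.symm
    rw [this]
  · intro σ hσ
    rw [Finset.mem_filter] at hσ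
    have hσ' : σ ⟨v, hv⟩ = ⟨0, by omega⟩ := by
      have h1 : σ.symm ⟨0, hn⟩ = ⟨v, hv⟩ := Subtype.ext hσ.2
      rw [← h1, Equiv.apply_symm_apply]
    exact Phi_Psi hv hm σ hσ'
  · intro τ _
    exact Psi_Phi hv hm τ
  · intro σ hσ
    rw [Finset.mem_filter] at hσ
    have hσ' : σ ⟨v, hv⟩ = ⟨0, by omega⟩ := by
      have h1 : σ.symm ⟨0, hn⟩ = ⟨v, hv⟩ := Subtype.ext hσ.2
      rw [← h1, Equiv.apply_symm_apply]
    have := wt_Phi hv hm hG (Psi hv hm σ)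
    rw [Phi_Psi hv hm σ hσ'] at this
    exact this

end MinExpand

end DiGraph
namespace DiGraph

open Finset

lemma parts_subset_verts {X : DiGraph} {t : Finset ℕ} (ht : t ∈ X.parts) :
    t ⊆ X.verts := by
  obtain ⟨x, hx, rfl⟩ := mem_parts'.1 ht
  exact pcomp_subset X x

lemma parts_of_empty {X : DiGraph} (h : X.verts = ∅) : X.parts = ∅ := by
  rw [Finset.eq_empty_iff_forall_notMem]
  intro t ht
  obtain ⟨x, hxt⟩ := parts_nonempty ht
  have := parts_subset_verts ht hxt
  rw [h] at this
  exact absurd this (Finset.notMem_empty _)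

/-- The inner identity coming from the recursion for `a`. -/
lemma sum_over_part (a : DiGraph → ℚ) (ha : ARec a) {H : DiGraph} (hH : H.Good)
    (hparts : ∀ t ∈ H.parts, (H.induce t).IsOTree) {C : Finset ℕ} (hC : C ∈ H.parts) :
    ∑ v ∈ C, (-1 : ℚ) ^ (H.inDeg v) *
        (∏ t ∈ (H.induce (C.erase v)).parts, a (H.induce t))
      = (C.card : ℚ) * a (H.induce C) := by
  have hCsub : C ⊆ H.verts := parts_subset_verts hC
  have hT : (H.induce C).IsOTree := hparts C hC
  have hCeq : ∀ v ∈ C, H.pcomp v = C := by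
    intro v hv
    obtain ⟨x, hx, rfl⟩ := mem_parts'.1 hC
    exact pcomp_eq_of_mem hx hv
  rcases Nat.lt_or_ge C.card 2 with hc1 | hc2
  · -- C is a singleton
    obtain ⟨w, hw⟩ : ∃ w, C = {w} := by
      obtain ⟨x, hxt⟩ := parts_nonempty hC
      refine ⟨x, ?_⟩
      have : C.card = 1 := by
        have : 1 ≤ C.card := Finset.card_pos.2 ⟨x, hxt⟩
        omega
      obtain ⟨y, hy⟩ := Finset.card_eq_one.1 this
      rw [hy] at hxt ⊢
      rw [Finset.mem_singleton] at hxt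
      rw [hxt]
    subst hw
    rw [Finset.sum_singleton]
    have hdeg : H.inDeg w = 0 := by
      unfold inDeg
      rw [Finset.card_eq_zero, Finset.eq_empty_iff_forall_notMem]
      intro u hu
      rw [Finset.mem_filter] at hu
      obtain ⟨hu1, hu2⟩ := hu
      have hne : u ≠ w := hH.ne hu2
      have hadj : H.symGraph.Adj ⟨u, hu1⟩ ⟨w, hCsub (Finset.mem_singleton_self w)⟩ :=
        ⟨Or.inl hu2, fun h => hne (congrArg Subtype.val h)⟩
      have : u ∈ H.pcomp w := (mem_pcomp (hCsub (Finset.mem_singleton_self w))).2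
        ⟨hu1, hadj.reachable⟩
      rw [hCeq w (Finset.mem_singleton_self w)] at this
      rw [Finset.mem_singleton] at this
      exact hne this
    have hempty : ({w} : Finset ℕ).erase w = ∅ := Finset.erase_singleton w
    rw [hempty]
    have hpe : (H.induce (∅ : Finset ℕ)).parts = ∅ := parts_of_empty rfl
    rw [hpe, Finset.prod_empty, hdeg]
    have hcard1 : (H.induce {w}).verts.card = 1 := by
      show ({w} : Finset ℕ).card = 1
      exact Finset.card_singleton w
    rw [ha.1 (H.induce {w}) hT hcard1]
    simp
  · -- C has at least 2 elements
    have hrec := ha.2 (H.induce C) hT (by rwa [show (H.induce C).verts = C from rfl])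
    have hne : (C.card : ℚ) ≠ 0 := Nat.cast_ne_zero.2 (by omega)
    have hsum : ∀ v ∈ C, (-1 : ℚ) ^ ((H.induce C).inDeg v) *
        (∏ᶠ c : ((H.induce C).delV v).symGraph.ConnectedComponent,
          a (((H.induce C).delV v).component c))
        = (-1 : ℚ) ^ (H.inDeg v) *
          (∏ t ∈ (H.induce (C.erase v)).parts, a (H.induce t)) := by
      intro v hv
      have hvverts : v ∈ H.verts := hCsub hv
      congr 1
      · -- degrees agree
        have h1 := inDeg_induce_pcomp hH hvverts
        rw [hCeq v hv] at h1
        rw [h1]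
      · rw [finprod_component_eq_prod_parts]
        rw [induce_delV H C v]
        refine Finset.prod_congr rfl fun t ht => ?_
        rw [induce_induce H (s := C.erase v) (parts_subset_verts ht)]
    rw [← Finset.sum_congr rfl hsum]
    rw [show (H.induce C).verts = C from rfl] at hrec
    rw [hrec]
    rw [← mul_assoc, mul_one_div, div_self hne, one_mul]

/-- The master lemma: `W` of a forest in terms of the tree coefficients. -/
lemma W_forest (a : DiGraph → ℚ) (ha : ARec a) :
    ∀ (n : ℕ) (H : DiGraph), H.verts.card = n → H.Good →
      (∀ t ∈ H.parts, (H.induce t).IsOTree) →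
      H.W = (Nat.factorial n) * ∏ s ∈ H.parts, a (H.induce s) := by
  intro n
  induction n using Nat.strong_induction_on with
  | _ n ih =>
    intro H hn hH hparts
    rcases Nat.eq_zero_or_pos n with h0 | hpos
    · subst h0
      have hverts : H.verts = ∅ := Finset.card_eq_zero.1 hn
      have hEp : H.Ep = ∅ := by
        rw [Finset.eq_empty_iff_forall_notMem]
        intro p hp
        have := (mem_Ep.1 hp).1
        rw [hverts] at this
        exact absurd this (Finset.notMem_empty _)
      rw [W_of_Ep_empty hEp, parts_of_empty hverts, Finset.prod_empty, hn]
      simp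
    · have hn1 : 1 ≤ H.verts.card := by omega
      rw [W_min_expand hH hn1]
      have hterm : ∀ v ∈ H.verts,
          (-1:ℚ) ^ (H.inDeg v) * (H.delV v).W
          = (-1:ℚ) ^ (H.inDeg v) * ((Nat.factorial (n-1)) *
              ((∏ t ∈ H.parts.erase (H.pcomp v), a (H.induce t)) *
                ∏ t ∈ (H.induce ((H.pcomp v).erase v)).parts, a (H.induce t))) := by
        intro v hv
        congr 1
        rw [delV_eq_induce hH.1 v]
        have hcard : (H.induce (H.verts.erase v)).verts.card = n - 1 := by
          show (H.verts.erase v).card = n - 1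
          rw [Finset.card_erase_of_mem hv, hn]
        have hgood : (H.induce (H.verts.erase v)).Good := hH.induce _
        have hp2 : ∀ t ∈ (H.induce (H.verts.erase v)).parts,
            ((H.induce (H.verts.erase v)).induce t).IsOTree := by
          intro t ht
          rw [induce_induce H (s := H.verts.erase v) (parts_subset_verts ht)]
          exact induce_part_isOTree hparts (Finset.erase_subset _ _) ht
        rw [ih (n-1) (by omega) _ hcard hgood hp2]
        congr 1
        have hprod : ∀ t ∈ (H.induce (H.verts.erase v)).parts,
            a ((H.induce (H.verts.erase v)).induce t) = a (H.induce t) := by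
          intro t ht
          rw [induce_induce H (s := H.verts.erase v) (parts_subset_verts ht)]
        rw [Finset.prod_congr rfl hprod]
        rw [parts_induce_erase hv]
        rw [Finset.prod_union (parts_induce_erase_disjoint hv)]
      rw [Finset.sum_congr rfl hterm]
      -- regroup the sum over vertices by the parts
      have hdisj : ∀ s ∈ H.parts, ∀ t ∈ H.parts, s ≠ t → Disjoint s t :=
        fun s hs t ht hst => parts_disjoint hs ht hst
      have hre : ∑ v ∈ H.verts, (-1:ℚ) ^ (H.inDeg v) * ((Nat.factorial (n-1)) *
              ((∏ t ∈ H.parts.erase (H.pcomp v), a (H.induce t)) *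
                ∏ t ∈ (H.induce ((H.pcomp v).erase v)).parts, a (H.induce t)))
          = ∑ C ∈ H.parts, ∑ v ∈ C, (-1:ℚ) ^ (H.inDeg v) * ((Nat.factorial (n-1)) *
              ((∏ t ∈ H.parts.erase (H.pcomp v), a (H.induce t)) *
                ∏ t ∈ (H.induce ((H.pcomp v).erase v)).parts, a (H.induce t))) := by
        have hbi := Finset.sum_biUnion (s := H.parts) (t := id)
          (f := fun v => (-1:ℚ) ^ (H.inDeg v) * ((Nat.factorial (n-1)) *
              ((∏ t ∈ H.parts.erase (H.pcomp v), a (H.induce t)) *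
                ∏ t ∈ (H.induce ((H.pcomp v).erase v)).parts, a (H.induce t))))
          (fun s hs t ht hst => parts_disjoint hs ht hst)
        rw [parts_biUnion H] at hbi
        simp only [id_eq] at hbi
        exact hbi
      rw [hre]
      have hinner : ∀ C ∈ H.parts, ∑ v ∈ C, (-1:ℚ) ^ (H.inDeg v) *
            ((Nat.factorial (n-1)) *
              ((∏ t ∈ H.parts.erase (H.pcomp v), a (H.induce t)) *
                ∏ t ∈ (H.induce ((H.pcomp v).erase v)).parts, a (H.induce t)))
          = (Nat.factorial (n-1)) * ((C.card : ℚ) * ∏ t ∈ H.parts, a (H.induce t)) := by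
        intro C hC
        have hCC : ∀ v ∈ C, H.pcomp v = C := by
          intro v hv
          obtain ⟨x, hx, rfl⟩ := mem_parts'.1 hC
          exact pcomp_eq_of_mem hx hv
        have hstep : ∀ v ∈ C, (-1:ℚ) ^ (H.inDeg v) *
            ((Nat.factorial (n-1)) *
              ((∏ t ∈ H.parts.erase (H.pcomp v), a (H.induce t)) *
                ∏ t ∈ (H.induce ((H.pcomp v).erase v)).parts, a (H.induce t)))
            = ((Nat.factorial (n-1)) * ∏ t ∈ H.parts.erase C, a (H.induce t)) *
              ((-1:ℚ) ^ (H.inDeg v) *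
                ∏ t ∈ (H.induce (C.erase v)).parts, a (H.induce t)) := by
          intro v hv
          rw [hCC v hv]
          ring
        rw [Finset.sum_congr rfl hstep, ← Finset.mul_sum]
        rw [sum_over_part a ha hH hparts hC]
        have hmpe : a (H.induce C) * ∏ t ∈ H.parts.erase C, a (H.induce t)
            = ∏ t ∈ H.parts, a (H.induce t) :=
          Finset.mul_prod_erase H.parts (fun t => a (H.induce t)) hC
        rw [← hmpe]
        ring
      rw [Finset.sum_congr rfl hinner, ← Finset.mul_sum]
      have hsc : ∑ C ∈ H.parts, ((C.card : ℚ) * ∏ t ∈ H.parts, a (H.induce t))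
          = (n : ℚ) * ∏ t ∈ H.parts, a (H.induce t) := by
        rw [← Finset.sum_mul]
        congr 1
        rw [← Nat.cast_sum]
        rw [sum_parts_card H, hn]
      rw [hsc]
      have hfact : (Nat.factorial (n-1) : ℚ) * n = Nat.factorial n := by
        have h1 : n - 1 + 1 = n := by omega
        rw [← h1, Nat.factorial_succ]
        push_cast
        ring
      rw [← mul_assoc, hfact]

end DiGraph
namespace DiGraph

open Finset

lemma a_eq_W (a : DiGraph → ℚ) (ha : ARec a) {G : DiGraph} (hG : G.IsOTree) :
    a G = G.W / Nat.factorial G.verts.card := by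
  have hn1 : 1 ≤ G.verts.card := by
    obtain ⟨x⟩ := hG.2.2.1.nonempty
    exact Finset.card_pos.2 ⟨x.1, x.2⟩
  rcases eq_or_lt_of_le hn1 with h1 | h2
  · have hcard : G.verts.card = 1 := h1.symm
    have hEp : G.Ep = ∅ := by
      rw [Finset.eq_empty_iff_forall_notMem]
      intro p hp
      obtain ⟨q1, q2, q3⟩ := mem_Ep.1 hp
      obtain ⟨x, hx⟩ := Finset.card_eq_one.1 hcard
      rw [hx, Finset.mem_singleton] at q1 q2
      exact hG.good.ne q3 (q1.trans q2.symm)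
    rw [ha.1 G hG hcard, W_of_Ep_empty hEp, hcard]
    norm_num
  · have h2' : 2 ≤ G.verts.card := h2
    have hrec := ha.2 G hG h2'
    have hfne : (Nat.factorial (G.verts.card - 1) : ℚ) ≠ 0 :=
      Nat.cast_ne_zero.2 (Nat.factorial_ne_zero _)
    have hdel : ∀ v ∈ G.verts, (∏ᶠ c : (G.delV v).symGraph.ConnectedComponent,
        a ((G.delV v).component c))
        = (G.delV v).W / Nat.factorial (G.verts.card - 1) := by
      intro v hv
      have hgood : (G.delV v).Good := by
        constructor
        · rintro i j ⟨he, hi, hj⟩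
          exact ⟨Finset.mem_erase.2 ⟨hi, (hG.1 i j he).1⟩,
            Finset.mem_erase.2 ⟨hj, (hG.1 i j he).2⟩⟩
        · rintro i j ⟨he, -⟩ ⟨he', -⟩
          exact hG.2.1 i j he he'
      have hparts : ∀ t ∈ (G.delV v).parts, ((G.delV v).induce t).IsOTree := by
        intro t ht
        rw [delV_eq_induce hG.1 v] at ht ⊢
        rw [induce_induce G (s := G.verts.erase v) (parts_subset_verts ht)]
        exact induce_part_isOTree (fun t' ht' => otree_parts hG ht')
          (Finset.erase_subset _ _) ht
      have hcard : (G.delV v).verts.card = G.verts.card - 1 := by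
        show (G.verts.erase v).card = _
        rw [Finset.card_erase_of_mem hv]
      have hw := W_forest a ha (G.verts.card - 1) (G.delV v) hcard hgood hparts
      rw [finprod_component_eq_prod_parts, eq_div_iff hfne, hw]
      ring
    rw [hrec, Finset.sum_congr rfl (fun v hv => by rw [hdel v hv])]
    have hmin := W_min_expand hG.good hn1
    have hstep : ∑ v ∈ G.verts, (-1 : ℚ) ^ (G.inDeg v) *
        ((G.delV v).W / Nat.factorial (G.verts.card - 1))
        = G.W / Nat.factorial (G.verts.card - 1) := by
      rw [hmin, Finset.sum_div]
      exact Finset.sum_congr rfl fun v _ => by rw [mul_div_assoc]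
    rw [hstep]
    have hnf : (G.verts.card : ℚ) * Nat.factorial (G.verts.card - 1)
        = Nat.factorial G.verts.card := by
      rw [← Nat.cast_mul]
      congr 1
      exact Nat.mul_factorial_pred (by omega)
    have hnne : (G.verts.card : ℚ) ≠ 0 := Nat.cast_ne_zero.2 (by omega)
    have hfne2 : (Nat.factorial G.verts.card : ℚ) ≠ 0 :=
      Nat.cast_ne_zero.2 (Nat.factorial_ne_zero _)
    have hcalc : (1 / (G.verts.card : ℚ)) * (G.W / Nat.factorial (G.verts.card - 1))
        = G.W / ((G.verts.card : ℚ) * Nat.factorial (G.verts.card - 1)) := by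
      field_simp
    rw [hcalc, hnf]

lemma a_even_zero (a : DiGraph → ℚ) (ha : ARec a) {G : DiGraph} (hG : G.IsOTree)
    (he : Even G.verts.card) : a G = 0 := by
  rw [a_eq_W a ha hG, W_eq_zero_of_even hG he, zero_div]

end DiGraph
namespace DiGraph

open Finset

section Quot

variable {G : DiGraph} {P : Finset (Finset ℕ)}

lemma sup_id_mem {s : Finset ℕ} (hs : s.Nonempty) : s.sup id ∈ s := by
  obtain ⟨b, hb, hbe⟩ := Finset.exists_mem_eq_sup s hs id
  rw [hbe]
  exact hb

lemma block_subset (hP : G.IsDecomp P) {s : Finset ℕ} (hs : s ∈ P) : s ⊆ G.verts := by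
  intro x hx
  rw [← hP.2.2.1]
  rw [Finset.mem_biUnion]
  exact ⟨s, hs, hx⟩

lemma block_unique (hP : G.IsDecomp P) {s t : Finset ℕ} (hs : s ∈ P) (ht : t ∈ P)
    {x : ℕ} (hxs : x ∈ s) (hxt : x ∈ t) : s = t := by
  by_contra h
  have := hP.2.1 s hs t ht h
  rw [Finset.disjoint_left] at this
  exact this hxs hxt

lemma rep_inj (hP : G.IsDecomp P) {s t : Finset ℕ} (hs : s ∈ P) (ht : t ∈ P)
    (h : s.sup id = t.sup id) : s = t :=
  block_unique hP hs ht (sup_id_mem (hP.1 s hs)) (h ▸ sup_id_mem (hP.1 t ht))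

lemma quot_verts_card (hP : G.IsDecomp P) : (G.quotGraph P).verts.card = P.card := by
  show (P.image fun s => s.sup id).card = P.card
  rw [Finset.card_image_of_injOn]
  intro s hs t ht h
  exact rep_inj hP hs ht h

lemma rep_mem_quot {s : Finset ℕ} (hs : s ∈ P) :
    s.sup id ∈ (G.quotGraph P).verts :=
  Finset.mem_image.2 ⟨s, hs, rfl⟩

/-- Projection of walks to the quotient graph. -/
lemma quot_reach_of_walk (hP : G.IsDecomp P) :
    ∀ {x y : {a // a ∈ G.verts}} (w : G.symGraph.Walk x y) {s t : Finset ℕ}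
      (hs : s ∈ P) (ht : t ∈ P), x.1 ∈ s → y.1 ∈ t →
      (G.quotGraph P).symGraph.Reachable
        ⟨s.sup id, rep_mem_quot hs⟩ ⟨t.sup id, rep_mem_quot ht⟩ := by
  intro x y w
  induction w with
  | nil =>
    intro s t hs ht hxs hyt
    have hst : s = t := block_unique hP hs ht hxs hyt
    subst hst
    rfl
  | @cons x b y hadj w' ih =>
    intro s t hs ht hxs hyt
    obtain ⟨u, hu, hbu⟩ : ∃ u ∈ P, b.1 ∈ u := by
      have hb : b.1 ∈ P.biUnion id := by
        rw [hP.2.2.1]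
        exact b.2
      rw [Finset.mem_biUnion] at hb
      obtain ⟨u, hu, hbu⟩ := hb
      exact ⟨u, hu, hbu⟩
    have hrest := ih hu ht hbu hyt
    refine SimpleGraph.Reachable.trans ?_ hrest
    by_cases hsu : s = u
    · subst hsu
      rfl
    · refine SimpleGraph.Adj.reachable ?_
      have hne : s.sup id ≠ u.sup id := fun h => hsu (rep_inj hP hs hu h)
      constructor
      · rcases hadj.1 with hE | hE
        · exact Or.inl ⟨hne, s, hs, u, hu, rfl, rfl, x.1, hxs, b.1, hbu, hE⟩
        · exact Or.inr ⟨hne.symm, u, hu, s, hs, rfl, rfl, b.1, hbu, x.1, hxs, hE⟩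
      · intro h
        exact hne (congrArg Subtype.val h)

lemma quot_connected (hG : G.IsOTree) (hP : G.IsDecomp P) (hPne : P.Nonempty) :
    (G.quotGraph P).symGraph.Connected := by
  obtain ⟨s0, hs0⟩ := hPne
  have hne : Nonempty {a // a ∈ (G.quotGraph P).verts} := ⟨⟨s0.sup id, rep_mem_quot hs0⟩⟩
  refine SimpleGraph.Connected.mk ?_
  intro A B
  obtain ⟨s, hs, hsup⟩ := Finset.mem_image.1 A.2
  obtain ⟨t, ht, htup⟩ := Finset.mem_image.1 B.2
  have hxs : s.sup id ∈ s := sup_id_mem (hP.1 s hs)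
  have hyt : t.sup id ∈ t := sup_id_mem (hP.1 t ht)
  have hx : s.sup id ∈ G.verts := block_subset hP hs hxs
  have hy : t.sup id ∈ G.verts := block_subset hP ht hyt
  obtain ⟨w⟩ := hG.2.2.1.preconnected ⟨s.sup id, hx⟩ ⟨t.sup id, hy⟩
  have := quot_reach_of_walk hP w hs ht hxs hyt
  have hA : A = ⟨s.sup id, rep_mem_quot hs⟩ := Subtype.ext hsup.symm
  have hB : B = ⟨t.sup id, rep_mem_quot ht⟩ := Subtype.ext htup.symm
  rw [hA, hB]
  exact this

/-- The finset of edges of `G` crossing between different blocks. -/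
noncomputable def crossQ (G : DiGraph) (P : Finset (Finset ℕ)) : Finset (ℕ × ℕ) :=
  G.Ep.filter (fun p => ∀ s ∈ P, ¬(p.1 ∈ s ∧ p.2 ∈ s))

lemma crossQ_card (hG : G.IsOTree) (hP : G.IsDecomp P) (hPne : P.Nonempty) :
    (crossQ G P).card + 1 = P.card := by
  have hsplit : (P.biUnion fun s => (G.induce s).Ep) ∪ crossQ G P = G.Ep := by
    ext p
    rw [Finset.mem_union, Finset.mem_biUnion]
    unfold crossQ
    rw [Finset.mem_filter]
    constructor
    · rintro (⟨s, hs, hps⟩ | ⟨hp, -⟩)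
      · obtain ⟨q1, q2, q3⟩ := mem_Ep.1 hps
        exact mem_Ep.2 ⟨block_subset hP hs q1, block_subset hP hs q2, q3.1⟩
      · exact hp
    · intro hp
      by_cases hcross : ∀ s ∈ P, ¬(p.1 ∈ s ∧ p.2 ∈ s)
      · exact Or.inr ⟨hp, hcross⟩
      · push_neg at hcross
        obtain ⟨s, hs, h1, h2⟩ := hcross
        exact Or.inl ⟨s, hs, mem_Ep.2 ⟨h1, h2, (mem_Ep.1 hp).2.2, h1, h2⟩⟩
  have hdisj : Disjoint (P.biUnion fun s => (G.induce s).Ep) (crossQ G P) := by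
    rw [Finset.disjoint_left]
    intro p hp hp'
    rw [Finset.mem_biUnion] at hp
    obtain ⟨s, hs, hps⟩ := hp
    unfold crossQ at hp'
    rw [Finset.mem_filter] at hp'
    obtain ⟨q1, q2, q3⟩ := mem_Ep.1 hps
    exact hp'.2 s hs ⟨q1, q2⟩
  have hbd : ∀ s ∈ P, ∀ t ∈ P, s ≠ t → Disjoint ((G.induce s).Ep) ((G.induce t).Ep) := by
    intro s hs t ht hst
    rw [Finset.disjoint_left]
    intro p hps hpt
    exact hst (block_unique hP hs ht (mem_Ep.1 hps).1 (mem_Ep.1 hpt).1)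
  have h1 : G.Ep.card = (∑ s ∈ P, (G.induce s).Ep.card) + (crossQ G P).card := by
    rw [← hsplit, Finset.card_union_of_disjoint hdisj, Finset.card_biUnion hbd]
  have h2 : ∀ s ∈ P, (G.induce s).Ep.card + 1 = s.card := by
    intro s hs
    have := card_Ep_of_isOTree (hP.2.2.2 s hs)
    rwa [show (G.induce s).verts = s from rfl] at this
  have h3 : (∑ s ∈ P, (G.induce s).Ep.card) + P.card = G.verts.card := by
    have hbi := Finset.card_biUnion (s := P) (t := id)
      (fun s hs t ht hst => hP.2.1 s hs t ht hst)
    rw [hP.2.2.1] at hbi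
    rw [hbi, Finset.card_eq_sum_ones P, ← Finset.sum_add_distrib]
    exact Finset.sum_congr rfl fun s hs => h2 s hs
  have h4 := card_Ep_of_isOTree hG
  have h5 : 1 ≤ P.card := Finset.card_pos.2 hPne
  omega

lemma quot_Ep_card_le (hG : G.IsOTree) (hP : G.IsDecomp P) :
    (G.quotGraph P).Ep.card ≤ (crossQ G P).card := by
  classical
  set blk : ℕ → Finset ℕ := fun x => if h : ∃ s ∈ P, x ∈ s then h.choose else ∅ with hblk
  have hblkP : ∀ {x s}, s ∈ P → x ∈ s → blk x = s := by
    intro x s hs hxs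
    have hex : ∃ s ∈ P, x ∈ s := ⟨s, hs, hxs⟩
    rw [hblk]
    simp only [dif_pos hex]
    obtain ⟨h1, h2⟩ := hex.choose_spec
    exact block_unique hP h1 hs h2 hxs
  apply Finset.card_le_card_of_surjOn (fun p => ((blk p.1).sup id, (blk p.2).sup id))
  intro q hq
  rw [Finset.mem_coe] at hq
  obtain ⟨hq1, hq2, hqe⟩ := mem_Ep.1 hq
  obtain ⟨hne, s, hs, t, ht, hsup1, hsup2, i, hi, j, hj, hE⟩ := hqe
  refine ⟨(i, j), ?_, ?_⟩
  · rw [Finset.mem_coe]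
    unfold crossQ
    rw [Finset.mem_filter]
    refine ⟨mem_Ep.2 ⟨block_subset hP hs hi, block_subset hP ht hj, hE⟩, ?_⟩
    intro u hu ⟨hiu, hju⟩
    apply hne
    rw [← hsup1, ← hsup2]
    rw [← block_unique hP hu hs hiu hi, ← block_unique hP hu ht hju hj]
  · show ((blk i).sup id, (blk j).sup id) = q
    rw [hblkP hs hi, hblkP ht hj, hsup1, hsup2]

/-- Any symmetric edge of a digraph comes from an oriented edge. -/
lemma edgeFinset_card_le_Ep_card (X : DiGraph)
    (hne : Nonempty {x // x ∈ X.verts})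
    {Q : Finset (ℕ × ℕ)} (hQ : Q ⊆ X.Ep)
    (hcover : ∀ p ∈ X.Ep, ∃ q ∈ Q, (q.1 = p.1 ∧ q.2 = p.2) ∨ (q.1 = p.2 ∧ q.2 = p.1)) :
    X.symGraph.edgeFinset.card ≤ Q.card := by
  classical
  obtain ⟨x0⟩ := hne
  set f : ℕ × ℕ → Sym2 {x // x ∈ X.verts} := fun p =>
    if h : p.1 ∈ X.verts ∧ p.2 ∈ X.verts then s(⟨p.1, h.1⟩, ⟨p.2, h.2⟩)
    else s(x0, x0) with hf
  apply Finset.card_le_card_of_surjOn f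
  intro e he
  rw [Finset.mem_coe, SimpleGraph.mem_edgeFinset] at he
  induction e with
  | _ a b =>
    rw [SimpleGraph.mem_edgeSet] at he
    obtain ⟨hab, hne'⟩ := he
    have hget : ∀ (c d : {x // x ∈ X.verts}), X.E c.1 d.1 → s(c, d) ∈ f '' ↑Q := by
      intro c d hcd
      have hp : (c.1, d.1) ∈ X.Ep := mem_Ep.2 ⟨c.2, d.2, hcd⟩
      obtain ⟨q, hqQ, hq⟩ := hcover _ hp
      refine ⟨q, Finset.mem_coe.2 hqQ, ?_⟩
      have hq1 : q.1 ∈ X.verts ∧ q.2 ∈ X.verts := by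
        have := mem_Ep.1 (hQ hqQ)
        exact ⟨this.1, this.2.1⟩
      rw [hf]
      simp only [dif_pos hq1]
      rcases hq with ⟨h1, h2⟩ | ⟨h1, h2⟩
      · have e1 : (⟨q.1, hq1.1⟩ : {x // x ∈ X.verts}) = c := Subtype.ext h1
        have e2 : (⟨q.2, hq1.2⟩ : {x // x ∈ X.verts}) = d := Subtype.ext h2
        rw [e1, e2]
      · have e1 : (⟨q.1, hq1.1⟩ : {x // x ∈ X.verts}) = d := Subtype.ext h1
        have e2 : (⟨q.2, hq1.2⟩ : {x // x ∈ X.verts}) = c := Subtype.ext h2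
        rw [e1, e2, Sym2.eq_swap]
    rcases hab with h | h
    · exact hget a b h
    · have := hget b a h
      rwa [Sym2.eq_swap] at this

/-- The quotient of a tree by a decomposition into subtrees is a tree. -/
lemma quot_isOTree (hG : G.IsOTree) (hP : G.IsDecomp P) (hPne : P.Nonempty) :
    (G.quotGraph P).IsOTree := by
  have hconn := quot_connected hG hP hPne
  have hcard := quot_verts_card (G := G) hP
  have hfin : Fintype.card {x // x ∈ (G.quotGraph P).verts} = P.card := by
    rw [Fintype.card_coe, hcard]
  have hsane : ∀ i j, (G.quotGraph P).E i j →
      i ∈ (G.quotGraph P).verts ∧ j ∈ (G.quotGraph P).verts := by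
    rintro i j ⟨-, s, hs, t, ht, h1, h2, -⟩
    exact ⟨h1 ▸ rep_mem_quot hs, h2 ▸ rep_mem_quot ht⟩
  have hEpQle := quot_Ep_card_le hG hP
  have hcross := crossQ_card hG hP hPne
  have hlow : P.card ≤ (G.quotGraph P).symGraph.edgeSet.ncard + 1 := by
    have := TreeAux.card_le_of_connected _ ((G.quotGraph P).symGraph) rfl hconn
    rw [hfin] at this
    exact this
  have hEcard : (G.quotGraph P).symGraph.edgeSet.ncard
      = (G.quotGraph P).symGraph.edgeFinset.card :=
    TreeAux.ncard_eq_card_edgeFinset _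
  have hnoflip : ∀ i j, (G.quotGraph P).E i j → ¬ (G.quotGraph P).E j i := by
    intro i j hij hji
    have hne' : i ≠ j := hij.1
    have hi : i ∈ (G.quotGraph P).verts := (hsane i j hij).1
    have hj : j ∈ (G.quotGraph P).verts := (hsane i j hij).2
    have hij' : (i, j) ∈ (G.quotGraph P).Ep := mem_Ep.2 ⟨hi, hj, hij⟩
    have hji' : (j, i) ∈ (G.quotGraph P).Ep := mem_Ep.2 ⟨hj, hi, hji⟩
    -- the erased set still covers all oriented edges up to swap
    have hle2 : (G.quotGraph P).symGraph.edgeFinset.card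
        ≤ ((G.quotGraph P).Ep.erase (i, j)).card := by
      apply edgeFinset_card_le_Ep_card _ hconn.nonempty
        (Finset.erase_subset _ _ |>.trans (le_refl _))
      intro p hp
      by_cases hpij : p = (i, j)
      · refine ⟨(j, i), Finset.mem_erase.2 ⟨?_, hji'⟩, ?_⟩
        · intro h
          have h1 : j = i := congrArg Prod.fst h
          exact hne' h1.symm
        · right
          rw [hpij]
          exact ⟨rfl, rfl⟩
      · exact ⟨p, Finset.mem_erase.2 ⟨hpij, hp⟩, Or.inl ⟨rfl, rfl⟩⟩
    have hero : ((G.quotGraph P).Ep.erase (i, j)).card = (G.quotGraph P).Ep.card - 1 :=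
      Finset.card_erase_of_mem hij'
    have hEp1 : 1 ≤ (G.quotGraph P).Ep.card := Finset.card_pos.2 ⟨_, hij'⟩
    omega
  have hle : (G.quotGraph P).symGraph.edgeFinset.card ≤ (G.quotGraph P).Ep.card := by
    apply edgeFinset_card_le_Ep_card _ hconn.nonempty (le_refl _)
    intro p hp
    exact ⟨p, hp, Or.inl ⟨rfl, rfl⟩⟩
  refine ⟨hsane, hnoflip, ?_⟩
  apply TreeAux.isTree_of_connected_of_card _ hconn
  rw [hfin, hEcard]
  omega

end Quot

end DiGraph
/-- The coefficients `e_T` defined by the collapse recursion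
`e_T = − Σ_{m=1}^{n_T−1} Σ_{∪ₖ Tₖ ≃ T} e_{T/{Tₖ}} ∏ₖ a_{Tₖ}`, `e_• = 1`, where the `a_T`
satisfy their defining recursion, vanish for every tree with an even number of
vertices. -/
theorem eT_vanishes_for_even_trees (a e : DiGraph → ℚ)
    (ha : DiGraph.ARec a) (he : DiGraph.ERec a e) :
    ∀ G : DiGraph, G.IsOTree → Even G.verts.card → e G = 0 := by
  suffices h : ∀ (n : ℕ) (G : DiGraph), G.verts.card = n → G.IsOTree →
      Even G.verts.card → e G = 0 by
    intro G hG hev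
    exact h _ G rfl hG hev
  intro n
  induction n using Nat.strong_induction_on with
  | _ n ih =>
    intro G hn hG heven
    have h1 : 1 ≤ G.verts.card := by
      obtain ⟨x⟩ := hG.2.2.1.nonempty
      exact Finset.card_pos.2 ⟨x.1, x.2⟩
    have h2 : 2 ≤ G.verts.card := by
      obtain ⟨k, hk⟩ := heven
      omega
    rw [he.2 G hG h2, neg_eq_zero]
    apply Finset.sum_eq_zero
    intro P hPmem
    rw [Finset.mem_filter] at hPmem
    obtain ⟨-, hdec, hlt⟩ := hPmem
    by_cases hodd : ∀ s ∈ P, ¬ Even s.card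
    · -- all blocks are odd, so the quotient is an even tree with fewer vertices
      have hPne : P.Nonempty := by
        rcases Finset.eq_empty_or_nonempty P with hemp | hne
        · exfalso
          have hb := hdec.2.2.1
          rw [hemp, Finset.biUnion_empty] at hb
          rw [← hb] at h1
          simp at h1
        · exact hne
      have hsum : ∑ s ∈ P, s.card = G.verts.card := by
        have hbi := Finset.card_biUnion (s := P) (t := id)
          (fun s hs t ht hst => hdec.2.1 s hs t ht hst)
        rw [hdec.2.2.1] at hbi
        rw [hbi]
        rfl
      have hPeven : Even P.card := by
        have hodd' : ∀ s ∈ P, Odd s.card := fun s hs => Nat.not_even_iff_odd.1 (hodd s hs)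
        have hdvd : (2 : ℕ) ∣ ∑ s ∈ P, (s.card - 1) := by
          apply Finset.dvd_sum
          intro s hs
          obtain ⟨k, hk⟩ := hodd' s hs
          exact ⟨k, by omega⟩
        have hsum2 : (∑ s ∈ P, (s.card - 1)) + P.card = ∑ s ∈ P, s.card := by
          rw [Finset.card_eq_sum_ones P, ← Finset.sum_add_distrib]
          refine Finset.sum_congr rfl fun s hs => ?_
          have hpos : 1 ≤ s.card := Finset.card_pos.2 (hdec.1 s hs)
          omega
        obtain ⟨c, hc⟩ := hdvd
        obtain ⟨k, hk⟩ := heven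
        rw [Nat.even_iff]
        omega
      have hquot := DiGraph.quot_isOTree hG hdec hPne
      have hqcard := DiGraph.quot_verts_card (G := G) hdec
      have heq : e (G.quotGraph P) = 0 := by
        refine ih P.card (by omega) (G.quotGraph P) hqcard hquot ?_
        rw [hqcard]
        exact hPeven
      rw [heq, zero_mul]
    · -- some block is even, so its `a`-coefficient vanishes
      push_neg at hodd
      obtain ⟨s, hs, hsev⟩ := hodd
      have hzero : a (G.induce s) = 0 :=
        DiGraph.a_even_zero a ha (hdec.2.2.2 s hs)
          (show Even (G.induce s).verts.card from hsev)
      rw [Finset.prod_eq_zero hs hzero, mul_zero]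
end

section
/- For the linear tree L_n with n vertices, the coefficient e_{L_n} from the collapse recursion e_T = −Σ_{m<n_T} Σ_{∪Tₖ≃T} e_{T/{Tₖ}} ∏ₖ a_{Tₖ}, e_• = 1, equals 1/n when n is odd (e.g. e_{L₃}=1/3, e_{L₅}=1/5, e_{L₇}=1/7) and 0 when n is even. -/
open scoped Classical

/-- The linear tree `L_{n+1} = •—•—···—•` with `n+1` vertices `0,…,n` and all edges
`i → i+1` oriented in the same direction. -/
def linTree (n : ℕ) : DiGraph :=
  ⟨Finset.range (n + 1), fun i j => j = i + 1 ∧ j ≤ n⟩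




section Prelim

/-- `i` and `j` are consecutive elements of `t` (with `i < j`). -/
def consec (t : Finset ℕ) (i j : ℕ) : Prop :=
  i ∈ t ∧ j ∈ t ∧ i < j ∧ ∀ k ∈ t, k ≤ i ∨ j ≤ k

/-- A "cut" argument: if a predicate is preserved by adjacency, it is constant on
connected components. -/
theorem reachable_iff_of_cut {V : Type*} {K : SimpleGraph V} (p : V → Prop)
    (h : ∀ a b, K.Adj a b → (p a ↔ p b)) {x y : V} (hr : K.Reachable x y) :
    p x ↔ p y := by
  obtain ⟨w⟩ := hr
  induction w with
  | nil => rfl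
  | cons hadj _ ih => exact (h _ _ hadj).trans ih

/-- Walk up a chain: if all consecutive pairs between `x` and `y` are adjacent,
then `x` and `y` are reachable. -/
theorem reachable_of_consec {t : Finset ℕ} {K : SimpleGraph {z : ℕ // z ∈ t}}
    (x y : {z : ℕ // z ∈ t}) (hxy : x.1 ≤ y.1)
    (hadj : ∀ a b : {z : ℕ // z ∈ t}, x.1 ≤ a.1 → b.1 ≤ y.1 → consec t a.1 b.1 → K.Adj a b) :
    K.Reachable x y := by
  obtain ⟨x, hx⟩ := x; obtain ⟨y, hy⟩ := y
  by_cases hlt : x < y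
  · -- strong induction on the number of elements in (x, y]
    set d := (t.filter fun z => x < z ∧ z ≤ y).card with hd
    clear_value d
    induction d using Nat.strong_induction_on generalizing x with
    | _ d ih =>
      subst hd
      have hne : (t.filter fun z => x < z ∧ z ≤ y).Nonempty :=
        ⟨y, Finset.mem_filter.2 ⟨hy, hlt, le_rfl⟩⟩
      set z := (t.filter fun z => x < z ∧ z ≤ y).min' hne with hzdef
      have hzmem := (t.filter fun z => x < z ∧ z ≤ y).min'_mem hne
      rw [Finset.mem_filter] at hzmem
      obtain ⟨hzt, hxz, hzy⟩ := hzmem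
      have hcons : consec t x z := by
        refine ⟨hx, hzt, hxz, fun k hk => ?_⟩
        by_contra hcon
        push_neg at hcon
        obtain ⟨h1, h2⟩ := hcon
        have : z ≤ k := Finset.min'_le _ _ (Finset.mem_filter.2 ⟨hk, h1, le_of_lt (lt_of_lt_of_le h2 hzy)⟩)
        omega
      have hadjxz : K.Adj ⟨x, hx⟩ ⟨z, hzt⟩ := hadj _ _ le_rfl hzy hcons
      rcases eq_or_lt_of_le hzy with heq | hzy'
      · have hzy2 : (⟨z, hzt⟩ : {z // z ∈ t}) = ⟨y, hy⟩ := Subtype.ext heq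
        rw [hzy2] at hadjxz
        exact hadjxz.reachable
      · have hsub : (t.filter fun w => z < w ∧ w ≤ y) ⊂ (t.filter fun w => x < w ∧ w ≤ y) := by
          constructor
          · intro w hw
            rw [Finset.mem_filter] at hw ⊢
            exact ⟨hw.1, lt_trans hxz hw.2.1, hw.2.2⟩
          · intro hsub
            have := hsub (Finset.mem_filter.2 ⟨hzt, hxz, hzy⟩)
            rw [Finset.mem_filter] at this
            omega
        have := ih _ (Finset.card_lt_card hsub) z hzt hzy
          (fun a b hxa hby => hadj a b (le_trans (le_of_lt hxz) hxa) hby) hzy' rfl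
        exact hadjxz.reachable.trans this
  · have : x = y := le_antisymm hxy (not_lt.1 hlt)
    subst this
    rfl

end Prelim

section OrderIsoUtil

variable {t : Finset ℕ} {n : ℕ} (h : t.card = n)

/-- The `i`-th element of `t` in increasing order, as a natural number. -/
noncomputable def elt (h : t.card = n) (i : Fin n) : ℕ := (t.orderIsoOfFin h i : ℕ)

theorem elt_mem (i : Fin n) : elt h i ∈ t := (t.orderIsoOfFin h i).2

theorem elt_lt_iff {i j : Fin n} : elt h i < elt h j ↔ i < j := by
  rw [elt, elt, Subtype.coe_lt_coe, OrderIso.lt_iff_lt]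

theorem elt_le_iff {i j : Fin n} : elt h i ≤ elt h j ↔ i ≤ j := by
  rw [elt, elt, Subtype.coe_le_coe, OrderIso.le_iff_le]

theorem elt_injective : Function.Injective (elt h) := by
  intro i j hij
  exact (t.orderIsoOfFin h).injective (Subtype.ext hij)

theorem elt_inj_iff {i j : Fin n} : elt h i = elt h j ↔ i = j :=
  ⟨fun hh => elt_injective h hh, fun hh => by rw [hh]⟩

theorem mem_iff_elt {x : ℕ} : x ∈ t ↔ ∃ i : Fin n, elt h i = x := by
  constructor
  · intro hx
    exact ⟨(t.orderIsoOfFin h).symm ⟨x, hx⟩, by simp [elt]⟩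
  · rintro ⟨i, rfl⟩
    exact elt_mem h i

theorem consec_elt_iff {i j : Fin n} : consec t (elt h i) (elt h j) ↔ (j : ℕ) = i + 1 := by
  constructor
  · rintro ⟨-, -, hlt, hbet⟩
    rw [elt_lt_iff] at hlt
    by_contra hne
    have hij : (i : ℕ) + 1 < j := by omega
    have hi1 : (i : ℕ) + 1 < n := lt_trans hij j.2
    rcases hbet (elt h ⟨(i : ℕ) + 1, hi1⟩) (elt_mem h _) with hc | hc
    · rw [elt_le_iff] at hc
      simp [Fin.le_def] at hc
    · rw [elt_le_iff] at hc
      simp [Fin.le_def] at hc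
      omega
  · intro hj
    refine ⟨elt_mem h i, elt_mem h j, ?_, ?_⟩
    · rw [elt_lt_iff]; exact Fin.lt_def.2 (by omega)
    · intro k hk
      obtain ⟨m, rfl⟩ := (mem_iff_elt h).1 hk
      rcases le_or_gt (m : ℕ) (i : ℕ) with hm | hm
      · exact Or.inl ((elt_le_iff h).2 (Fin.le_def.2 hm))
      · exact Or.inr ((elt_le_iff h).2 (Fin.le_def.2 (by omega)))

theorem card_filter_lt_elt (i : Fin n) : (t.filter (· < elt h i)).card = i := by
  have himg : t.filter (· < elt h i)
      = (Finset.univ.filter (fun j : Fin n => j < i)).image (elt h) := by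
    ext x
    simp only [Finset.mem_filter, Finset.mem_image, Finset.mem_univ, true_and]
    constructor
    · rintro ⟨hx, hlt⟩
      obtain ⟨m, rfl⟩ := (mem_iff_elt h).1 hx
      exact ⟨m, (elt_lt_iff h).1 hlt, rfl⟩
    · rintro ⟨m, hm, rfl⟩
      exact ⟨elt_mem h m, (elt_lt_iff h).2 hm⟩
  rw [himg, Finset.card_image_of_injective _ (elt_injective h)]
  have : (Finset.univ.filter (fun j : Fin n => j < i)).image Fin.val = Finset.range i := by
    ext x
    simp only [Finset.mem_image, Finset.mem_filter, Finset.mem_univ, true_and,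
      Finset.mem_range]
    constructor
    · rintro ⟨j, hj, rfl⟩; exact hj
    · intro hx
      exact ⟨⟨x, lt_trans hx i.2⟩, Fin.lt_def.2 hx, rfl⟩
  rw [← Finset.card_image_of_injective (Finset.univ.filter (fun j : Fin n => j < i))
    Fin.val_injective, this, Finset.card_range]

theorem card_filter_gt_elt (i : Fin n) : (t.filter (elt h i < ·)).card = n - (i + 1) := by
  have hsplit : t = (t.filter (· < elt h i)) ∪ {elt h i} ∪ (t.filter (elt h i < ·)) := by
    ext x
    simp only [Finset.mem_union, Finset.mem_filter, Finset.mem_singleton]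
    constructor
    · intro hx
      rcases lt_trichotomy x (elt h i) with hc | hc | hc
      · exact Or.inl (Or.inl ⟨hx, hc⟩)
      · exact Or.inl (Or.inr hc)
      · exact Or.inr ⟨hx, hc⟩
    · rintro ((⟨hx, -⟩ | rfl) | ⟨hx, -⟩)
      · exact hx
      · exact elt_mem h i
      · exact hx
  have hd1 : Disjoint ((t.filter (· < elt h i)) ∪ {elt h i}) (t.filter (elt h i < ·)) := by
    rw [Finset.disjoint_left]
    intro x hx hx2
    simp only [Finset.mem_union, Finset.mem_filter, Finset.mem_singleton] at hx hx2
    rcases hx with ⟨-, hc⟩ | rfl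
    · omega
    · omega
  have hd2 : Disjoint (t.filter (· < elt h i)) ({elt h i} : Finset ℕ) := by
    rw [Finset.disjoint_left]
    intro x hx hx2
    simp only [Finset.mem_filter, Finset.mem_singleton] at hx hx2
    omega
  have := h
  rw [hsplit, Finset.card_union_of_disjoint hd1, Finset.card_union_of_disjoint hd2,
    card_filter_lt_elt h i, Finset.card_singleton] at this
  omega

end OrderIsoUtil

namespace DiGraph

/-- `G` is a "linear" digraph: its edges are exactly the pairs of consecutive
vertices, oriented upwards. -/
def IsLin (G : DiGraph) : Prop := ∀ i j, G.E i j ↔ consec G.verts i j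

theorem linTree_verts (n : ℕ) : (linTree n).verts = Finset.range (n + 1) := rfl

theorem linTree_card (n : ℕ) : (linTree n).verts.card = n + 1 := by
  simp [linTree_verts]

theorem linTree_isLin (n : ℕ) : (linTree n).IsLin := by
  intro i j
  show (j = i + 1 ∧ j ≤ n) ↔ _
  constructor
  · rintro ⟨rfl, hj⟩
    refine ⟨?_, ?_, by omega, ?_⟩
    · simp [linTree_verts, Finset.mem_range]; omega
    · simp [linTree_verts, Finset.mem_range]; omega
    · intro k hk
      omega
  · rintro ⟨hi, hj, hlt, hbet⟩
    simp only [linTree_verts, Finset.mem_range] at hi hj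
    rcases hbet (i + 1) (by simp [linTree_verts, Finset.mem_range]; omega) with hc | hc
    · omega
    · constructor <;> omega

theorem IsLin.symAdj {G : DiGraph} (hG : G.IsLin) (a b : {x : ℕ // x ∈ G.verts}) :
    G.symGraph.Adj a b ↔ consec G.verts a.1 b.1 ∨ consec G.verts b.1 a.1 := by
  show ((G.E a.1 b.1 ∨ G.E b.1 a.1) ∧ a ≠ b) ↔ _
  rw [hG, hG]
  constructor
  · rintro ⟨hor, -⟩; exact hor
  · rintro (hc | hc)
    · exact ⟨Or.inl hc, fun hab => by rw [hab] at hc; exact absurd hc.2.2.1 (lt_irrefl _)⟩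
    · exact ⟨Or.inr hc, fun hab => by rw [hab] at hc; exact absurd hc.2.2.1 (lt_irrefl _)⟩

/-- For a linear digraph, the induced subgraph on an "interval" subset is linear. -/
theorem IsLin.induce_interval {G : DiGraph} (hG : G.IsLin) {s : Finset ℕ} (hs : s ⊆ G.verts)
    (hint : ∀ i ∈ s, ∀ j ∈ s, ∀ k ∈ G.verts, i < k → k < j → k ∈ s) :
    (G.induce s).IsLin := by
  intro i j
  show (G.E i j ∧ i ∈ s ∧ j ∈ s) ↔ consec s i j
  rw [hG]
  constructor
  · rintro ⟨⟨-, -, hlt, hbet⟩, hi, hj⟩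
    refine ⟨hi, hj, hlt, fun k hk => hbet k (hs hk)⟩
  · rintro ⟨hi, hj, hlt, hbet⟩
    refine ⟨⟨hs hi, hs hj, hlt, fun k hk => ?_⟩, hi, hj⟩
    by_contra hcon
    push_neg at hcon
    exact absurd (hbet k (hint i hi j hj k hk hcon.1 hcon.2)) (by omega)

theorem IsLin.preconnected {G : DiGraph} (hG : G.IsLin) : G.symGraph.Preconnected := by
  intro x y
  rcases le_total x.1 y.1 with hle | hle
  · exact reachable_of_consec x y hle
      (fun a b _ _ hc => (hG.symAdj a b).2 (Or.inl hc))
  · exact (reachable_of_consec y x hle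
      (fun a b _ _ hc => (hG.symAdj a b).2 (Or.inl hc))).symm

theorem IsLin.bridge {G : DiGraph} (hG : G.IsLin) {u v : {x : ℕ // x ∈ G.verts}}
    (hc : consec G.verts u.1 v.1) : G.symGraph.IsBridge s(u, v) := by
  rw [SimpleGraph.isBridge_iff]
  refine fun hr => ?_
  have key : ∀ a b : {x : ℕ // x ∈ G.verts}, consec G.verts a.1 b.1 →
      s(a, b) ≠ s(u, v) → (a.1 ≤ u.1 ↔ b.1 ≤ u.1) := by
    intro a b hab hne
    by_contra hcon
    have hab_lt : a.1 < b.1 := hab.2.2.1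
    have h1 : a.1 ≤ u.1 ∧ u.1 < b.1 := by omega
    rcases eq_or_lt_of_le h1.1 with heq | hlt
    · have hau : a = u := Subtype.ext heq
      subst hau
      rcases hc.2.2.2 b.1 hab.2.1 with hcb | hcb
      · omega
      · rcases hab.2.2.2 v.1 hc.2.1 with hcv | hcv
        · have : v.1 ≤ a.1 := hcv
          have := hc.2.2.1
          omega
        · have hbv : b = v := Subtype.ext (le_antisymm hcv hcb)
          exact hne (by rw [hbv])
    · rcases hab.2.2.2 u.1 u.2 with hcu | hcu <;> omega
  have hcut2 : ∀ a b : {x : ℕ // x ∈ G.verts},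
      (G.symGraph \ SimpleGraph.fromEdgeSet {s(u, v)}).Adj a b → (a.1 ≤ u.1 ↔ b.1 ≤ u.1) := by
    intro a b hadj
    rw [SimpleGraph.sdiff_adj] at hadj
    obtain ⟨hadj1, hnotin⟩ := hadj
    have hne : s(a, b) ≠ s(u, v) := by
      intro hh
      exact hnotin ((SimpleGraph.fromEdgeSet_adj _).2 ⟨by rw [hh]; rfl, hadj1.ne⟩)
    rcases (hG.symAdj a b).1 hadj1 with hcab | hcba
    · exact key a b hcab hne
    · have hne' : s(b, a) ≠ s(u, v) := by rw [Sym2.eq_swap]; exact hne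
      exact (key b a hcba hne').symm
  have := reachable_iff_of_cut _ hcut2 hr
  have huv := hc.2.2.1
  simp only [le_refl, true_iff] at this
  omega

theorem IsLin.isOTree {G : DiGraph} (hG : G.IsLin) (hne : G.verts.Nonempty) : G.IsOTree := by
  refine ⟨?_, ?_, ?_, ?_⟩
  · intro i j hij
    rw [hG] at hij
    exact ⟨hij.1, hij.2.1⟩
  · intro i j hij hji
    rw [hG] at hij hji
    have := hij.2.2.1; have := hji.2.2.1; omega
  · have : Nonempty {x : ℕ // x ∈ G.verts} := ⟨⟨hne.choose, hne.choose_spec⟩⟩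
    exact ⟨hG.preconnected⟩
  · rw [SimpleGraph.isAcyclic_iff_forall_adj_isBridge]
    intro x y hadj
    rcases (hG.symAdj x y).1 hadj with hc | hc
    · exact hG.bridge hc
    · rw [Sym2.eq_swap]
      exact hG.bridge hc

end DiGraph

namespace DiGraph

theorem ext'_s16 {G1 G2 : DiGraph} (hv : G1.verts = G2.verts)
    (hE : ∀ i j, G1.E i j ↔ G2.E i j) : G1 = G2 := by
  cases G1 with
  | mk v1 E1 =>
    cases G2 with
    | mk v2 E2 =>
      simp only at hv hE
      subst hv
      have : E1 = E2 := by
        funext i j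
        exact propext (hE i j)
      rw [this]

/-- Value of the product over connected components after deleting the `i`-th vertex
of a linear digraph. -/
theorem finprod_comp_delV {G : DiGraph} (hG : G.IsLin) {n : ℕ} (h : G.verts.card = n)
    (i : Fin n) (f : DiGraph → ℚ) :
    ∏ᶠ c : (G.delV (elt h i)).symGraph.ConnectedComponent, f ((G.delV (elt h i)).component c)
      = (if (i : ℕ) = 0 then 1 else f (G.induce (G.verts.filter (· < elt h i)))) *
        (if (i : ℕ) = n - 1 then 1 else f (G.induce (G.verts.filter (elt h i < ·)))) := by
  set v := elt h i with hv
  set H := G.delV v with hH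
  have hvmem : v ∈ G.verts := elt_mem h i
  have hHverts : H.verts = G.verts.erase v := rfl
  have hHE : ∀ x y, H.E x y ↔ (G.E x y ∧ x ≠ v ∧ y ≠ v) := fun x y => Iff.rfl
  have hin : n ≠ 0 := by have := i.2; omega
  -- membership facts
  have hmemH : ∀ x, x ∈ H.verts ↔ (x ∈ G.verts ∧ x ≠ v) := by
    intro x; rw [hHverts, Finset.mem_erase]; tauto
  -- consecutive in H implies consecutive in G when not straddling v
  have hcons : ∀ p q : ℕ, consec H.verts p q → ¬(p < v ∧ v < q) → consec G.verts p q := by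
    rintro p q ⟨hp, hq, hlt, hbet⟩ hst
    refine ⟨((hmemH p).1 hp).1, ((hmemH q).1 hq).1, hlt, fun k hk => ?_⟩
    by_cases hkv : k = v
    · subst hkv; omega
    · exact hbet k ((hmemH k).2 ⟨hk, hkv⟩)
  -- the cut property
  have hcut : ∀ a b : {x : ℕ // x ∈ H.verts}, H.symGraph.Adj a b → ((a.1 < v) ↔ (b.1 < v)) := by
    intro a b hadj
    obtain ⟨hor, -⟩ := hadj
    have hane : a.1 ≠ v := ((hmemH a.1).1 a.2).2
    have hbne : b.1 ≠ v := ((hmemH b.1).1 b.2).2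
    rcases hor with he | he
    · rw [hHE, hG] at he
      obtain ⟨⟨-, -, hlt, hbet⟩, -, -⟩ := he
      rcases hbet v hvmem with hc | hc <;> omega
    · rw [hHE, hG] at he
      obtain ⟨⟨-, -, hlt, hbet⟩, -, -⟩ := he
      rcases hbet v hvmem with hc | hc <;> omega
  -- same-side reachability
  have hreach : ∀ a b : {x : ℕ // x ∈ H.verts},
      ((a.1 < v ∧ b.1 < v) ∨ (v < a.1 ∧ v < b.1)) → H.symGraph.Reachable a b := by
    have haux : ∀ a b : {x : ℕ // x ∈ H.verts}, a.1 ≤ b.1 →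
        ((a.1 < v ∧ b.1 < v) ∨ (v < a.1 ∧ v < b.1)) → H.symGraph.Reachable a b := by
      intro a b hab hside
      refine reachable_of_consec a b hab (fun p q hap hqb hc => ?_)
      have hpq := hc.2.2.1
      have hcg : consec G.verts p.1 q.1 := by
        apply hcons _ _ hc
        rcases hside with ⟨h1, h2⟩ | ⟨h1, h2⟩ <;> omega
      have hpne : p.1 ≠ v := ((hmemH p.1).1 p.2).2
      have hqne : q.1 ≠ v := ((hmemH q.1).1 q.2).2
      refine ⟨Or.inl ((hHE _ _).2 ⟨(hG _ _).2 hcg, hpne, hqne⟩), ?_⟩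
      intro hh; rw [hh] at hpq; omega
    intro a b hside
    rcases le_total a.1 b.1 with hle | hle
    · exact haux a b hle hside
    · exact (haux b a hle (by tauto)).symm
  -- every vertex of H is on one side
  have hside : ∀ x : {z : ℕ // z ∈ H.verts}, x.1 < v ∨ v < x.1 := by
    intro x
    have := ((hmemH x.1).1 x.2).2
    omega
  -- the two candidate vertex sets
  set L := G.verts.filter (· < v) with hL
  set R := G.verts.filter (v < ·) with hR
  have hindL : H.induce L = G.induce L := by
    refine ext'_s16 rfl (fun x y => ?_)
    show (H.E x y ∧ x ∈ L ∧ y ∈ L) ↔ (G.E x y ∧ x ∈ L ∧ y ∈ L)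
    rw [hHE]
    simp only [hL, Finset.mem_filter]
    constructor
    · rintro ⟨⟨he, -, -⟩, h1, h2⟩; exact ⟨he, h1, h2⟩
    · rintro ⟨he, h1, h2⟩
      exact ⟨⟨he, by omega, by omega⟩, h1, h2⟩
  have hindR : H.induce R = G.induce R := by
    refine ext'_s16 rfl (fun x y => ?_)
    show (H.E x y ∧ x ∈ R ∧ y ∈ R) ↔ (G.E x y ∧ x ∈ R ∧ y ∈ R)
    rw [hHE]
    simp only [hR, Finset.mem_filter]
    constructor
    · rintro ⟨⟨he, -, -⟩, h1, h2⟩; exact ⟨he, h1, h2⟩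
    · rintro ⟨he, h1, h2⟩
      exact ⟨⟨he, by omega, by omega⟩, h1, h2⟩
  letI : Fintype (H.symGraph.ConnectedComponent) :=
    @Fintype.ofFinite _ (Finite.of_surjective _ (fun c => Quot.exists_rep c))
  rw [finprod_eq_prod_of_fintype]
  -- case analysis on the position of i
  by_cases hi0 : (i : ℕ) = 0
  · -- no left part
    by_cases hin1 : (i : ℕ) = n - 1
    · -- single vertex graph: H has no vertices
      have hn1 : n = 1 := by omega
      have hempty : H.verts = ∅ := by
        rw [hHverts]
        have : G.verts = {v} := by
          apply Finset.eq_singleton_iff_unique_mem.2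
          refine ⟨hvmem, fun x hx => ?_⟩
          obtain ⟨m, rfl⟩ := (mem_iff_elt h).1 hx
          have : m = i := by
            apply Fin.ext
            have := m.2; omega
          rw [this]
        rw [this, Finset.erase_singleton]
      haveI hccempty : IsEmpty (H.symGraph.ConnectedComponent) := by
        constructor
        intro c
        refine c.ind (fun x => ?_)
        obtain ⟨y, hy⟩ := x
        rw [hempty] at hy
        simp at hy
      rw [if_pos hi0, if_pos hin1, Finset.univ_eq_empty, Finset.prod_empty, one_mul]
    · -- only a right part
      have hiR : (i : ℕ) + 1 < n := by omega
      set iR : Fin n := ⟨(i : ℕ) + 1, hiR⟩ with hiRdef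
      have hxRv : v < elt h iR := by
        rw [hv, elt_lt_iff]; exact Fin.lt_def.2 (by simp [hiRdef])
      have hxRmem : elt h iR ∈ H.verts := (hmemH _).2 ⟨elt_mem h iR, by omega⟩
      set xR : {z : ℕ // z ∈ H.verts} := ⟨elt h iR, hxRmem⟩ with hxRdef
      set cR := H.symGraph.connectedComponentMk xR with hcR
      have hclass : ∀ c : H.symGraph.ConnectedComponent, c = cR := by
        refine fun c => c.ind (fun x => ?_)
        rcases hside x with hx | hx
        · exfalso
          have hxv : x.1 < v := hx
          have hvx : v ≤ x.1 := by
            have hmem := ((hmemH x.1).1 x.2).1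
            obtain ⟨m, hm⟩ := (mem_iff_elt h).1 hmem
            rw [hv, ← hm]
            rw [elt_le_iff]
            exact Fin.le_def.2 (by omega)
          omega
        · exact SimpleGraph.ConnectedComponent.eq.2 (hreach x xR (Or.inr ⟨hx, hxRv⟩))
      have huniv : (Finset.univ : Finset (H.symGraph.ConnectedComponent)) = {cR} := by
        ext c; simp [hclass c]
      rw [huniv, Finset.prod_singleton, if_pos hi0, if_neg hin1, one_mul]
      congr 1
      -- component cR = G.induce R
      have hcompV : H.compVerts cR = R := by
        rw [compVerts]
        ext x
        simp only [Finset.mem_filter, hR]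
        constructor
        · rintro ⟨hx, hx2, -⟩
          refine ⟨((hmemH x).1 hx).1, ?_⟩
          rcases hside ⟨x, hx⟩ with hc | hc
          · exfalso
            have hc' : x < v := hc
            have hmem := ((hmemH x).1 hx).1
            obtain ⟨m, hm⟩ := (mem_iff_elt h).1 hmem
            have : v ≤ x := by
              rw [hv, ← hm, elt_le_iff]; exact Fin.le_def.2 (by omega)
            omega
          · exact hc
        · rintro ⟨hx, hxv⟩
          have hxH : x ∈ H.verts := (hmemH x).2 ⟨hx, by omega⟩
          exact ⟨hxH, hxH, SimpleGraph.ConnectedComponent.eq.2 (hreach ⟨x, hxH⟩ xR (Or.inr ⟨hxv, hxRv⟩))⟩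
      rw [component, hcompV, hindR]
  · by_cases hin1 : (i : ℕ) = n - 1
    · -- only a left part
      have hiL : (i : ℕ) - 1 < n := by omega
      set iL : Fin n := ⟨(i : ℕ) - 1, hiL⟩ with hiLdef
      have hxLv : elt h iL < v := by
        rw [hv, elt_lt_iff]; exact Fin.lt_def.2 (by simp [hiLdef]; omega)
      have hxLmem : elt h iL ∈ H.verts := (hmemH _).2 ⟨elt_mem h iL, by omega⟩
      set xL : {z : ℕ // z ∈ H.verts} := ⟨elt h iL, hxLmem⟩ with hxLdef
      set cL := H.symGraph.connectedComponentMk xL with hcL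
      have hclass : ∀ c : H.symGraph.ConnectedComponent, c = cL := by
        refine fun c => c.ind (fun x => ?_)
        rcases hside x with hx | hx
        · exact SimpleGraph.ConnectedComponent.eq.2 (hreach x xL (Or.inl ⟨hx, hxLv⟩))
        · exfalso
          have hmem := ((hmemH x.1).1 x.2).1
          obtain ⟨m, hm⟩ := (mem_iff_elt h).1 hmem
          have : x.1 ≤ v := by
            rw [hv, ← hm, elt_le_iff]
            exact Fin.le_def.2 (by have := m.2; omega)
          omega
      have huniv : (Finset.univ : Finset (H.symGraph.ConnectedComponent)) = {cL} := by
        ext c; simp [hclass c]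
      rw [huniv, Finset.prod_singleton, if_neg hi0, if_pos hin1, mul_one]
      congr 1
      have hcompV : H.compVerts cL = L := by
        rw [compVerts]
        ext x
        simp only [Finset.mem_filter, hL]
        constructor
        · rintro ⟨hx, hx2, -⟩
          refine ⟨((hmemH x).1 hx).1, ?_⟩
          rcases hside ⟨x, hx⟩ with hc | hc
          · exact hc
          · exfalso
            have hc' : v < x := hc
            have hmem := ((hmemH x).1 hx).1
            obtain ⟨m, hm⟩ := (mem_iff_elt h).1 hmem
            have : x ≤ v := by
              rw [hv, ← hm]
              rw [elt_le_iff]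
              exact Fin.le_def.2 (by have := m.2; omega)
            omega
        · rintro ⟨hx, hxv⟩
          have hxH : x ∈ H.verts := (hmemH x).2 ⟨hx, by omega⟩
          exact ⟨hxH, hxH, SimpleGraph.ConnectedComponent.eq.2 (hreach ⟨x, hxH⟩ xL (Or.inl ⟨hxv, hxLv⟩))⟩
      rw [component, hcompV, hindL]
    · -- two parts
      have hiL : (i : ℕ) - 1 < n := by omega
      have hiR : (i : ℕ) + 1 < n := by omega
      set iL : Fin n := ⟨(i : ℕ) - 1, hiL⟩ with hiLdef
      set iR : Fin n := ⟨(i : ℕ) + 1, hiR⟩ with hiRdef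
      have hxLv : elt h iL < v := by
        rw [hv, elt_lt_iff]; exact Fin.lt_def.2 (by simp [hiLdef]; omega)
      have hxRv : v < elt h iR := by
        rw [hv, elt_lt_iff]; exact Fin.lt_def.2 (by simp [hiRdef])
      have hxLmem : elt h iL ∈ H.verts := (hmemH _).2 ⟨elt_mem h iL, by omega⟩
      have hxRmem : elt h iR ∈ H.verts := (hmemH _).2 ⟨elt_mem h iR, by omega⟩
      set xL : {z : ℕ // z ∈ H.verts} := ⟨elt h iL, hxLmem⟩ with hxLdef
      set xR : {z : ℕ // z ∈ H.verts} := ⟨elt h iR, hxRmem⟩ with hxRdef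
      set cL := H.symGraph.connectedComponentMk xL with hcL
      set cR := H.symGraph.connectedComponentMk xR with hcR
      have hLR : cL ≠ cR := by
        intro hh
        have hr := SimpleGraph.ConnectedComponent.eq.1 hh
        have := reachable_iff_of_cut _ hcut hr
        simp only [hxLdef, hxRdef] at this
        have h1 : elt h iL < v := hxLv
        have h2 : v < elt h iR := hxRv
        rw [iff_iff_implies_and_implies] at this
        omega
      have hclass : ∀ c : H.symGraph.ConnectedComponent, c = cL ∨ c = cR := by
        refine fun c => c.ind (fun x => ?_)
        rcases hside x with hx | hx
        · exact Or.inl (SimpleGraph.ConnectedComponent.eq.2 (hreach x xL (Or.inl ⟨hx, hxLv⟩)))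
        · exact Or.inr (SimpleGraph.ConnectedComponent.eq.2 (hreach x xR (Or.inr ⟨hx, hxRv⟩)))
      have huniv : (Finset.univ : Finset (H.symGraph.ConnectedComponent)) = {cL, cR} := by
        ext c
        simp only [Finset.mem_univ, true_iff, Finset.mem_insert, Finset.mem_singleton]
        exact hclass c
      rw [huniv, Finset.prod_pair hLR, if_neg hi0, if_neg hin1]
      have hcompVL : H.compVerts cL = L := by
        rw [compVerts]
        ext x
        simp only [Finset.mem_filter, hL]
        constructor
        · rintro ⟨hx, hx2, hmk⟩
          refine ⟨((hmemH x).1 hx).1, ?_⟩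
          rcases hside ⟨x, hx⟩ with hc | hc
          · exact hc
          · exfalso
            have h1 : H.symGraph.connectedComponentMk ⟨x, hx2⟩ = cR :=
              SimpleGraph.ConnectedComponent.eq.2 (hreach ⟨x, hx2⟩ xR (Or.inr ⟨hc, hxRv⟩))
            rw [hmk] at h1
            exact hLR h1
        · rintro ⟨hx, hxv⟩
          have hxH : x ∈ H.verts := (hmemH x).2 ⟨hx, by omega⟩
          exact ⟨hxH, hxH, SimpleGraph.ConnectedComponent.eq.2 (hreach ⟨x, hxH⟩ xL (Or.inl ⟨hxv, hxLv⟩))⟩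
      have hcompVR : H.compVerts cR = R := by
        rw [compVerts]
        ext x
        simp only [Finset.mem_filter, hR]
        constructor
        · rintro ⟨hx, hx2, hmk⟩
          refine ⟨((hmemH x).1 hx).1, ?_⟩
          rcases hside ⟨x, hx⟩ with hc | hc
          · exfalso
            have h1 : H.symGraph.connectedComponentMk ⟨x, hx2⟩ = cL :=
              SimpleGraph.ConnectedComponent.eq.2 (hreach ⟨x, hx2⟩ xL (Or.inl ⟨hc, hxLv⟩))
            rw [hmk] at h1
            exact hLR h1.symm
          · exact hc
        · rintro ⟨hx, hxv⟩
          have hxH : x ∈ H.verts := (hmemH x).2 ⟨hx, by omega⟩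
          exact ⟨hxH, hxH, SimpleGraph.ConnectedComponent.eq.2 (hreach ⟨x, hxH⟩ xR (Or.inr ⟨hxv, hxRv⟩))⟩
      rw [component, component, hcompVL, hcompVR, hindL, hindR]

end DiGraph

namespace DiGraph

theorem inDeg_elt {G : DiGraph} (hG : G.IsLin) {n : ℕ} (h : G.verts.card = n) (i : Fin n) :
    G.inDeg (elt h i) = if (i : ℕ) = 0 then 0 else 1 := by
  rw [inDeg]
  by_cases hi : (i : ℕ) = 0
  · rw [if_pos hi]
    convert Finset.card_empty
    ext w
    simp only [Finset.mem_filter, Finset.notMem_empty, iff_false, not_and]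
    intro hw he
    rw [hG] at he
    obtain ⟨m, rfl⟩ := (mem_iff_elt h).1 hw
    have := (consec_elt_iff h).1 he
    omega
  · rw [if_neg hi]
    have hiL : (i : ℕ) - 1 < n := by have := i.2; omega
    convert Finset.card_singleton (elt h ⟨(i : ℕ) - 1, hiL⟩)
    ext w
    simp only [Finset.mem_filter, Finset.mem_singleton]
    constructor
    · rintro ⟨hw, he⟩
      rw [hG] at he
      obtain ⟨m, rfl⟩ := (mem_iff_elt h).1 hw
      have := (consec_elt_iff h).1 he
      exact congrArg (elt h) (Fin.ext (by simp; omega))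
    · rintro rfl
      refine ⟨elt_mem h _, (hG _ _).2 ((consec_elt_iff h).2 (by simp; omega))⟩

section AVal

variable (aF : DiGraph → ℚ)

/-- The value of `a` on a linear tree with `n` vertices (`0` for `n = 0`). -/
noncomputable def αv : ℕ → ℚ := fun n => if n = 0 then 0 else aF (linTree (n - 1))

/-- `βv` is `αv` except that the empty product is `1`. -/
noncomputable def βv : ℕ → ℚ := fun n => if n = 0 then 1 else αv aF n

theorem linTree_nonempty (n : ℕ) : (linTree n).verts.Nonempty := by
  rw [linTree_verts]
  exact ⟨0, by simp⟩

theorem alpha_one (haF : ARec aF) : αv aF 1 = aF (linTree 0) := by simp [αv]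

theorem aF_one (haF : ARec aF) : aF (linTree 0) = 1 :=
  haF.1 (linTree 0) ((linTree_isLin 0).isOTree (linTree_nonempty 0)) (linTree_card 0)

theorem sum_step (haF : ARec aF) {G : DiGraph} (hG : G.IsLin) {n : ℕ} (h : G.verts.card = n)
    (hn : 2 ≤ n)
    (IH : ∀ G' : DiGraph, G'.IsLin → G'.verts.Nonempty → G'.verts.card < n →
      aF G' = αv aF G'.verts.card) :
    aF G = (1 / (n : ℚ)) * ∑ p ∈ Finset.range n,
      (if p = 0 then (1 : ℚ) else -1) * (βv aF p * βv aF (n - 1 - p)) := by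
  have hOT : G.IsOTree := hG.isOTree (by rw [← Finset.card_pos, h]; omega)
  rw [haF.2 G hOT (by omega), h]
  congr 1
  rw [← Fin.sum_univ_eq_sum_range (fun p => (if p = 0 then (1 : ℚ) else -1) *
    (βv aF p * βv aF (n - 1 - p)))]
  refine (Finset.sum_bij (fun (i : Fin n) _ => elt h i) (fun i _ => elt_mem h i)
    (fun i _ j _ hij => elt_injective h hij)
    (fun v hv => by
      obtain ⟨m, rfl⟩ := (mem_iff_elt h).1 hv
      exact ⟨m, Finset.mem_univ m, rfl⟩)
    (fun i _ => ?_)).symm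
  -- the per-vertex computation
  rw [inDeg_elt hG h i, finprod_comp_delV hG h i aF]
  have hcardL : (G.verts.filter (· < elt h i)).card = (i : ℕ) := card_filter_lt_elt h i
  have hcardR : (G.verts.filter (elt h i < ·)).card = n - ((i : ℕ) + 1) := card_filter_gt_elt h i
  have hLlin : (G.induce (G.verts.filter (· < elt h i))).IsLin := by
    refine hG.induce_interval (Finset.filter_subset _ _) ?_
    intro x hx y hy k hk h1 h2
    rw [Finset.mem_filter] at hy ⊢
    exact ⟨hk, lt_trans h2 hy.2⟩
  have hRlin : (G.induce (G.verts.filter (elt h i < ·))).IsLin := by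
    refine hG.induce_interval (Finset.filter_subset _ _) ?_
    intro x hx y hy k hk h1 h2
    rw [Finset.mem_filter] at hx ⊢
    exact ⟨hk, lt_trans hx.2 h1⟩
  have hvertL : (G.induce (G.verts.filter (· < elt h i))).verts = G.verts.filter (· < elt h i) := rfl
  have hvertR : (G.induce (G.verts.filter (elt h i < ·))).verts = G.verts.filter (elt h i < ·) := rfl
  by_cases hi0 : (i : ℕ) = 0
  · have hin1 : (i : ℕ) ≠ n - 1 := by omega
    simp only [if_pos hi0, if_neg hin1, pow_zero]
    have hR := IH _ hRlin (by rw [hvertR, ← Finset.card_pos, hcardR]; omega)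
      (by rw [hvertR, hcardR]; omega)
    rw [hR, hvertR, hcardR]
    have e1 : n - ((i : ℕ) + 1) = n - 1 - (i : ℕ) := by omega
    try rw [e1]
    try rw [show βv aF (i : ℕ) = 1 from by rw [βv, if_pos hi0]]
    try rw [show βv aF (n - 1 - (i : ℕ)) = αv aF (n - 1 - (i : ℕ)) from by
        rw [βv]; exact if_neg (by omega)]
    try ring
  · have hbL : βv aF (i : ℕ) = αv aF (i : ℕ) := by rw [βv, if_neg hi0]
    have hL := IH _ hLlin (by rw [hvertL, ← Finset.card_pos, hcardL]; omega)
      (by rw [hvertL, hcardL]; have := i.2; omega)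
    by_cases hin1 : (i : ℕ) = n - 1
    · simp only [if_neg hi0, if_pos hin1, pow_one]
      rw [hL, hvertL, hcardL]
      try rw [hbL]
      try rw [show n - 1 - (i : ℕ) = 0 from by omega]
      try rw [show βv aF 0 = 1 from by rw [βv, if_pos rfl]]
      try ring
    · simp only [if_neg hi0, if_neg hin1, pow_one]
      have hR := IH _ hRlin (by rw [hvertR, ← Finset.card_pos, hcardR]; omega)
        (by rw [hvertR, hcardR]; omega)
      rw [hL, hR, hvertL, hvertR, hcardL, hcardR]
      have e1 : n - ((i : ℕ) + 1) = n - 1 - (i : ℕ) := by omega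
      try rw [hbL]
      try rw [e1]
      try rw [show βv aF (n - 1 - (i : ℕ)) = αv aF (n - 1 - (i : ℕ)) from by
        rw [βv]; exact if_neg (by omega)]
      try ring

theorem aval (haF : ARec aF) : ∀ (n : ℕ) (G : DiGraph), G.IsLin → G.verts.card = n →
    G.verts.Nonempty → aF G = αv aF n := by
  intro n
  induction n using Nat.strong_induction_on with
  | _ n IH =>
    intro G hG hcard hne
    match n, hcard with
    | 0, hcard => exact absurd hcard (by rw [← Finset.card_pos] at hne; omega)
    | 1, hcard =>
      rw [haF.1 G (hG.isOTree hne) hcard, αv, if_neg one_ne_zero]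
      exact (aF_one aF haF).symm
    | (m + 2), hcard =>
      have hn : 2 ≤ m + 2 := by omega
      have IH' : ∀ G' : DiGraph, G'.IsLin → G'.verts.Nonempty → G'.verts.card < m + 2 →
          aF G' = αv aF G'.verts.card := fun G' h1 h2 h3 => IH _ h3 G' h1 rfl h2
      rw [sum_step aF haF hG hcard hn IH']
      have h2 := sum_step aF haF (linTree_isLin (m + 1))
        (show (linTree (m + 1)).verts.card = m + 2 from by rw [linTree_card]) hn IH'
      rw [αv, if_neg (by omega)]
      exact h2.symm

theorem alpha_rec (haF : ARec aF) {n : ℕ} (hn : 2 ≤ n) :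
    αv aF n = (1 / (n : ℚ)) * ∑ p ∈ Finset.range n,
      (if p = 0 then (1 : ℚ) else -1) * (βv aF p * βv aF (n - 1 - p)) := by
  have h1 : αv aF n = aF (linTree (n - 1)) := by rw [αv, if_neg (by omega)]
  have h2 := sum_step aF haF (linTree_isLin (n - 1))
    (show (linTree (n - 1)).verts.card = n from by rw [linTree_card]; omega) hn
    (fun G' h1 h2 _ => aval aF haF _ G' h1 rfl h2)
  rw [h1, h2]

end AVal

end DiGraph

namespace DiGraph

open PowerSeries

section Numeric

variable (aF : DiGraph → ℚ)

/-- The generating power series of the `a`-coefficients of linear trees. -/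
noncomputable def Aps : PowerSeries ℚ := PowerSeries.mk (αv aF)

/-- The claimed values of `e` on linear trees: `arctanh` coefficients. -/
noncomputable def εv : ℕ → ℚ := fun n => if Odd n then 1 / n else 0

theorem alpha_zero : αv aF 0 = 0 := by simp [αv]

theorem alpha_one' (haF : ARec aF) : αv aF 1 = 1 := by
  rw [alpha_one aF haF, aF_one aF haF]

theorem alpha_rec' (haF : ARec aF) (m : ℕ) :
    ((m + 2 : ℕ) : ℚ) * αv aF (m + 2) =
      - ∑ p ∈ Finset.HasAntidiagonal.antidiagonal (m + 1), αv aF p.1 * αv aF p.2 := by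
  have h0 := alpha_rec aF haF (n := m + 2) (by omega)
  have hne : ((m + 2 : ℕ) : ℚ) ≠ 0 := by positivity
  rw [h0, ← mul_assoc, mul_one_div, div_self hne, one_mul]
  -- both sides equal `- ∑_{p ∈ range m} αv (p+1) * αv (m - p)`
  have hL : ∑ p ∈ Finset.range (m + 2), (if p = 0 then (1 : ℚ) else -1) *
      (βv aF p * βv aF (m + 2 - 1 - p)) =
      - ∑ p ∈ Finset.range m, αv aF (p + 1) * αv aF (m - p) := by
    rw [Finset.sum_range_succ']
    have hf0 : (if 0 = 0 then (1 : ℚ) else -1) * (βv aF 0 * βv aF (m + 2 - 1 - 0)) =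
        αv aF (m + 1) := by
      rw [if_pos rfl, show βv aF 0 = 1 from by rw [βv, if_pos rfl], one_mul, one_mul,
        show m + 2 - 1 - 0 = m + 1 from by omega,
        show βv aF (m + 1) = αv aF (m + 1) from by rw [βv, if_neg (Nat.succ_ne_zero m)]]
    rw [hf0]
    have hstep : ∀ p ∈ Finset.range (m + 1),
        (if p + 1 = 0 then (1 : ℚ) else -1) * (βv aF (p + 1) * βv aF (m + 2 - 1 - (p + 1))) =
        - (αv aF (p + 1) * βv aF (m - p)) := by
      intro p hp
      rw [if_neg p.succ_ne_zero]
      have e1 : m + 2 - 1 - (p + 1) = m - p := by omega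
      rw [e1, show βv aF (p + 1) = αv aF (p + 1) from by rw [βv, if_neg p.succ_ne_zero]]
      ring
    rw [Finset.sum_congr rfl hstep, Finset.sum_range_succ]
    have e2 : m - m = 0 := by omega
    rw [e2, show βv aF 0 = 1 from by rw [βv, if_pos rfl]]
    have hstep2 : ∀ p ∈ Finset.range m,
        - (αv aF (p + 1) * βv aF (m - p)) = - (αv aF (p + 1) * αv aF (m - p)) := by
      intro p hp
      rw [Finset.mem_range] at hp
      rw [show βv aF (m - p) = αv aF (m - p) from by rw [βv, if_neg (by omega)]]
    rw [Finset.sum_congr rfl hstep2]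
    rw [Finset.sum_neg_distrib]
    ring
  have hR : ∑ p ∈ Finset.HasAntidiagonal.antidiagonal (m + 1), αv aF p.1 * αv aF p.2 =
      ∑ p ∈ Finset.range m, αv aF (p + 1) * αv aF (m - p) := by
    rw [Finset.Nat.sum_antidiagonal_eq_sum_range_succ_mk, Finset.sum_range_succ']
    rw [alpha_zero, zero_mul, add_zero, Finset.sum_range_succ]
    have e3 : m + 1 - (m + 1) = 0 := by omega
    rw [e3, alpha_zero, mul_zero, add_zero]
    refine Finset.sum_congr rfl (fun p hp => ?_)
    congr 1
    congr 1
    omega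
  rw [hL, hR]

theorem hAps (haF : ARec aF) : d⁄dX ℚ (Aps aF) = 1 - (Aps aF) ^ 2 := by
  ext n
  rw [PowerSeries.coeff_derivative, map_sub, PowerSeries.coeff_one, sq, PowerSeries.coeff_mul]
  simp only [Aps, PowerSeries.coeff_mk]
  cases n with
  | zero =>
    rw [if_pos rfl]
    simp only [Finset.Nat.antidiagonal_zero, Finset.sum_singleton]
    rw [alpha_zero, alpha_one' aF haF]
    norm_num
  | succ m =>
    rw [if_neg m.succ_ne_zero]
    have hrec := alpha_rec' aF haF m
    have e : m + 1 + 1 = m + 2 := rfl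
    rw [e]
    push_cast at hrec ⊢
    linear_combination hrec

/-- Coefficients of powers of `Aps`. -/
noncomputable def cA : ℕ → ℕ → ℚ := fun m n => PowerSeries.coeff n ((Aps aF) ^ m)

theorem cA_zero (n : ℕ) : cA aF 0 n = if n = 0 then 1 else 0 := by
  rw [cA, pow_zero, PowerSeries.coeff_one]

theorem cA_succ (m n : ℕ) : cA aF (m + 1) n =
    ∑ p ∈ Finset.HasAntidiagonal.antidiagonal n, αv aF p.1 * cA aF m p.2 := by
  rw [cA, pow_succ, mul_comm, PowerSeries.coeff_mul]
  simp [cA, Aps]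

theorem cA_vanish : ∀ m n : ℕ, n < m → cA aF m n = 0 := by
  intro m
  induction m with
  | zero => intro n hn; omega
  | succ m IH =>
    intro n hn
    rw [cA_succ]
    refine Finset.sum_eq_zero (fun p hp => ?_)
    rw [Finset.HasAntidiagonal.mem_antidiagonal] at hp
    rcases Nat.eq_zero_or_pos p.1 with h1 | h1
    · rw [h1, alpha_zero, zero_mul]
    · rw [IH p.2 (by omega), mul_zero]

theorem cA_deriv (haF : ARec aF) (m n : ℕ) :
    ((n : ℚ) + 1) * cA aF (m + 1) (n + 1) =
      ((m : ℚ) + 1) * (cA aF m n - cA aF (m + 2) n) := by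
  have hder := Derivation.leibniz_pow (d⁄dX ℚ) (Aps aF) (m + 1)
  rw [Nat.add_sub_cancel, smul_eq_mul, hAps aF haF, mul_sub, mul_one, ← pow_add] at hder
  have hc := congrArg (PowerSeries.coeff n) hder
  rw [PowerSeries.coeff_derivative, map_nsmul, nsmul_eq_mul, map_sub] at hc
  rw [cA, cA, cA]
  push_cast at hc
  linear_combination hc

/-- The central sum `S n = Σ_m εv m · cA m n`. -/
noncomputable def Sv : ℕ → ℚ := fun n => ∑ m ∈ Finset.range (n + 1), εv m * cA aF m n

theorem Sv_pad (n N : ℕ) (hN : n + 1 ≤ N) :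
    ∑ m ∈ Finset.range N, εv m * cA aF m n = Sv aF n := by
  rw [Sv, ← Finset.sum_range_add_sum_Ico _ hN]
  have : ∑ m ∈ Finset.Ico (n + 1) N, εv m * cA aF m n = 0 := by
    refine Finset.sum_eq_zero (fun m hm => ?_)
    rw [Finset.mem_Ico] at hm
    rw [cA_vanish aF m n (by omega), mul_zero]
  rw [this, add_zero]

theorem eps_succ_mul (m : ℕ) : ((m : ℚ) + 1) * εv (m + 1) = if Even m then 1 else 0 := by
  rw [εv]
  by_cases hm : Even m
  · rw [if_pos hm]
    simp only [if_pos (Even.add_one hm)]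
    have hne : ((m : ℚ) + 1) ≠ 0 := by positivity
    push_cast
    field_simp
  · rw [if_neg hm]
    simp only [if_neg (Nat.not_odd_iff_even.2 (Odd.add_one (Nat.not_even_iff_odd.1 hm)))]
    rw [mul_zero]

theorem telescope (n : ℕ) : ∀ N : ℕ,
    ∑ m ∈ Finset.range (2 * N), (if Even m then (cA aF m n - cA aF (m + 2) n) else 0) =
      cA aF 0 n - cA aF (2 * N) n := by
  intro N
  induction N with
  | zero => simp
  | succ N IH =>
    have hodd : ¬ Even (2 * N + 1) := by simp [Nat.even_add_one]
    have e1 : 2 * (N + 1) = (2 * N + 1) + 1 := by ring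
    rw [e1, Finset.sum_range_succ, Finset.sum_range_succ, IH,
      if_pos (even_two_mul N), if_neg hodd, add_zero,
      show 2 * N + 1 + 1 = 2 * N + 2 from by omega]
    ring

theorem Sv_succ (haF : ARec aF) (n : ℕ) :
    ((n : ℚ) + 1) * Sv aF (n + 1) = if n = 0 then 1 else 0 := by
  have hpad : Sv aF (n + 1) = ∑ m ∈ Finset.range (2 * (n + 2) + 1), εv m * cA aF m (n + 1) :=
    (Sv_pad aF (n + 1) _ (by omega)).symm
  rw [hpad, Finset.mul_sum]
  rw [Finset.sum_range_succ']
  have h0 : ((n : ℚ) + 1) * (εv 0 * cA aF 0 (n + 1)) = 0 := by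
    rw [show εv 0 = 0 from by simp [εv], zero_mul, mul_zero]
  rw [h0, add_zero]
  have hterm : ∀ m, ((n : ℚ) + 1) * (εv (m + 1) * cA aF (m + 1) (n + 1)) =
      (if Even m then (cA aF m n - cA aF (m + 2) n) else 0) := by
    intro m
    have h1 : ((n : ℚ) + 1) * (εv (m + 1) * cA aF (m + 1) (n + 1)) =
        εv (m + 1) * (((n : ℚ) + 1) * cA aF (m + 1) (n + 1)) := by ring
    rw [h1, cA_deriv aF haF m n]
    have h2 : εv (m + 1) * (((m : ℚ) + 1) * (cA aF m n - cA aF (m + 2) n)) =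
        (((m : ℚ) + 1) * εv (m + 1)) * (cA aF m n - cA aF (m + 2) n) := by ring
    rw [h2, eps_succ_mul]
    by_cases hm : Even m
    · rw [if_pos hm, if_pos hm, one_mul]
    · rw [if_neg hm, if_neg hm, zero_mul]
  rw [Finset.sum_congr rfl (fun m _ => hterm m)]
  rw [telescope aF n (n + 2)]
  rw [cA_vanish aF (2 * (n + 2)) n (by omega), sub_zero, cA_zero]

end Numeric

end DiGraph

namespace DiGraph

section Decomp

/-- All decompositions of `G`, as a finset. -/
noncomputable def DecF (G : DiGraph) : Finset (Finset (Finset ℕ)) :=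
  (G.verts.powerset.powerset).filter (fun P => G.IsDecomp P)

theorem block_sub {G : DiGraph} {P : Finset (Finset ℕ)} (hP : G.IsDecomp P)
    {s : Finset ℕ} (hs : s ∈ P) : s ⊆ G.verts := by
  rw [← hP.2.2.1]
  exact Finset.subset_biUnion_of_mem id hs

theorem mem_DecF {G : DiGraph} {P : Finset (Finset ℕ)} :
    P ∈ DecF G ↔ G.IsDecomp P := by
  rw [DecF, Finset.mem_filter]
  constructor
  · exact fun h => h.2
  · intro h
    refine ⟨?_, h⟩
    rw [Finset.mem_powerset]
    intro s hs
    rw [Finset.mem_powerset]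
    exact block_sub h hs

theorem block_unique_s16 {G : DiGraph} {P : Finset (Finset ℕ)} (hP : G.IsDecomp P)
    {x : ℕ} (hx : x ∈ G.verts) : ∃ s ∈ P, x ∈ s ∧ ∀ t ∈ P, x ∈ t → t = s := by
  have hx2 : x ∈ P.biUnion id := by rw [hP.2.2.1]; exact hx
  rw [Finset.mem_biUnion] at hx2
  obtain ⟨s, hs, hxs⟩ := hx2
  refine ⟨s, hs, hxs, fun t ht hxt => ?_⟩
  by_contra hne
  exact Finset.disjoint_left.1 (hP.2.1 t ht s hs hne) hxt hxs

/-- Blocks of a decomposition of a linear digraph are intervals. -/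
theorem block_interval {G : DiGraph} (hG : G.IsLin) {s : Finset ℕ} (hsub : s ⊆ G.verts)
    (hOT : (G.induce s).IsOTree) :
    ∀ i ∈ s, ∀ j ∈ s, ∀ k ∈ G.verts, i < k → k < j → k ∈ s := by
  intro i hi j hj k hk h1 h2
  by_contra hks
  have hconn : (G.induce s).symGraph.Preconnected := hOT.2.2.isConnected.preconnected
  have hreach := hconn ⟨i, hi⟩ ⟨j, hj⟩
  have hcut : ∀ a b : {x : ℕ // x ∈ (G.induce s).verts},
      (G.induce s).symGraph.Adj a b → (a.1 < k ↔ b.1 < k) := by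
    intro a b hadj
    obtain ⟨hor, -⟩ := hadj
    have key : ∀ x y : ℕ, (G.induce s).E x y → (x < k ↔ y < k) := by
      intro x y he
      obtain ⟨heG, hxs, hys⟩ := he
      rw [hG] at heG
      obtain ⟨-, -, hlt, hbet⟩ := heG
      have hxk : x ≠ k := fun hh => hks (hh ▸ hxs)
      have hyk : y ≠ k := fun hh => hks (hh ▸ hys)
      rcases hbet k hk with hc | hc <;> omega
    rcases hor with he | he
    · exact key _ _ he
    · exact (key _ _ he).symm
  have := reachable_iff_of_cut _ hcut hreach
  simp only at this
  omega

/-- The rank of a vertex. -/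
noncomputable def rnk (G : DiGraph) (x : ℕ) : ℕ := (G.verts.filter (· < x)).card

/-- The first `k` vertices of `G`. -/
noncomputable def pre (G : DiGraph) (k : ℕ) : Finset ℕ :=
  G.verts.filter (fun x => rnk G x < k)

/-- All but the first `k` vertices of `G`. -/
noncomputable def rest (G : DiGraph) (k : ℕ) : Finset ℕ :=
  G.verts.filter (fun x => k ≤ rnk G x)

theorem mem_pre {G : DiGraph} {k x : ℕ} : x ∈ pre G k ↔ x ∈ G.verts ∧ rnk G x < k := by
  rw [pre, Finset.mem_filter]

theorem mem_rest {G : DiGraph} {k x : ℕ} : x ∈ rest G k ↔ x ∈ G.verts ∧ k ≤ rnk G x := by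
  unfold rest
  exact Finset.mem_filter

theorem pre_subset {G : DiGraph} {k : ℕ} : pre G k ⊆ G.verts := by
  unfold pre; exact Finset.filter_subset _ _

theorem rest_subset {G : DiGraph} {k : ℕ} : rest G k ⊆ G.verts := by
  unfold rest; exact Finset.filter_subset _ _

theorem rnk_elt {G : DiGraph} {n : ℕ} (h : G.verts.card = n) (i : Fin n) :
    rnk G (elt h i) = i := card_filter_lt_elt h i

theorem rnk_mono (G : DiGraph) {x y : ℕ} (hxy : x ≤ y) : rnk G x ≤ rnk G y := by
  refine Finset.card_le_card (fun z hz => ?_)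
  rw [Finset.mem_filter] at hz ⊢
  exact ⟨hz.1, lt_of_lt_of_le hz.2 hxy⟩

theorem fin_filter_card {n k : ℕ} (hk : k ≤ n) :
    ((Finset.univ : Finset (Fin n)).filter (fun j : Fin n => (j : ℕ) < k)).card = k := by
  have himg : ((Finset.univ : Finset (Fin n)).filter (fun j : Fin n => (j : ℕ) < k)).image Fin.val
      = Finset.range k := by
    ext x
    simp only [Finset.mem_image, Finset.mem_range]
    constructor
    · rintro ⟨j, hj, rfl⟩; exact (Finset.mem_filter.1 hj).2
    · intro hx; exact ⟨⟨x, by omega⟩, Finset.mem_filter.2 ⟨Finset.mem_univ _, hx⟩, rfl⟩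
  rw [← Finset.card_image_of_injective _ Fin.val_injective, himg, Finset.card_range]

theorem pre_card {G : DiGraph} {n : ℕ} (h : G.verts.card = n) {k : ℕ} (hk : k ≤ n) :
    (pre G k).card = k := by
  have himg : pre G k = ((Finset.univ : Finset (Fin n)).filter
      (fun j : Fin n => (j : ℕ) < k)).image (elt h) := by
    ext x
    simp only [mem_pre, Finset.mem_image, Finset.mem_univ, true_and]
    constructor
    · rintro ⟨hx, hr⟩
      obtain ⟨m, rfl⟩ := (mem_iff_elt h).1 hx
      rw [rnk_elt h] at hr
      exact ⟨m, Finset.mem_filter.2 ⟨Finset.mem_univ _, hr⟩, rfl⟩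
    · rintro ⟨m, hm, rfl⟩
      exact ⟨elt_mem h m, by rw [rnk_elt h]; exact (Finset.mem_filter.1 hm).2⟩
  rw [himg, Finset.card_image_of_injective _ (elt_injective h), fin_filter_card hk]

theorem rest_eq (G : DiGraph) (k : ℕ) : rest G k = G.verts \ pre G k := by
  ext x
  simp only [mem_rest, mem_pre, Finset.mem_sdiff]
  constructor
  · rintro ⟨hx, hr⟩; exact ⟨hx, fun hh => by omega⟩
  · rintro ⟨hx, hr⟩
    refine ⟨hx, ?_⟩
    by_contra hc
    exact hr ⟨hx, by omega⟩


theorem rest_card {G : DiGraph} {n : ℕ} (h : G.verts.card = n) {k : ℕ} (hk : k ≤ n) :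
    (rest G k).card = n - k := by
  rw [rest_eq, Finset.card_sdiff_of_subset pre_subset, h, pre_card h hk]

theorem pre_lin {G : DiGraph} (hG : G.IsLin) (k : ℕ) : (G.induce (pre G k)).IsLin := by
  refine hG.induce_interval pre_subset ?_
  intro x hx y hy z hz h1 h2
  rw [mem_pre] at hy ⊢
  exact ⟨hz, lt_of_le_of_lt (rnk_mono G (le_of_lt h2)) hy.2⟩

theorem rest_lin {G : DiGraph} (hG : G.IsLin) (k : ℕ) : (G.induce (rest G k)).IsLin := by
  refine hG.induce_interval rest_subset ?_
  intro x hx y hy z hz h1 h2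
  rw [mem_rest] at hx ⊢
  exact ⟨hz, le_trans hx.2 (rnk_mono G (le_of_lt h1))⟩

theorem downclosed_eq_pre {G : DiGraph} {n : ℕ} (h : G.verts.card = n) {s : Finset ℕ}
    (hsub : s ⊆ G.verts) (hdc : ∀ x ∈ s, ∀ y ∈ G.verts, y ≤ x → y ∈ s) :
    s = pre G s.card := by
  have hk : s.card ≤ n := h ▸ Finset.card_le_card hsub
  have hss : s ⊆ pre G s.card := by
    intro x hx
    rw [mem_pre]
    refine ⟨hsub hx, ?_⟩
    have hsub2 : G.verts.filter (· < x) ⊆ s.erase x := by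
      intro y hy
      rw [Finset.mem_filter] at hy
      rw [Finset.mem_erase]
      exact ⟨by omega, hdc x hx y hy.1 (le_of_lt hy.2)⟩
    have h1 : rnk G x ≤ (s.erase x).card := Finset.card_le_card hsub2
    have h2 : (s.erase x).card = s.card - 1 := Finset.card_erase_of_mem hx
    have h3 : 1 ≤ s.card := Finset.card_pos.2 ⟨x, hx⟩
    rw [rnk] at *
    omega
  exact Finset.eq_of_subset_of_card_le hss (by rw [pre_card h hk])

/-- The smallest vertex of `G` (or `0`). -/
noncomputable def mnv (G : DiGraph) : ℕ :=
  if hne : G.verts.Nonempty then G.verts.min' hne else 0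

theorem mnv_mem {G : DiGraph} (hne : G.verts.Nonempty) : mnv G ∈ G.verts := by
  rw [mnv, dif_pos hne]; exact G.verts.min'_mem hne

theorem mnv_le {G : DiGraph} (hne : G.verts.Nonempty) {x : ℕ} (hx : x ∈ G.verts) :
    mnv G ≤ x := by
  rw [mnv, dif_pos hne]; exact G.verts.min'_le x hx

/-- The block of a decomposition containing the smallest vertex. -/
noncomputable def firstBlock (G : DiGraph) (P : Finset (Finset ℕ)) : Finset ℕ :=
  (P.filter (fun s => mnv G ∈ s)).biUnion id

theorem firstBlock_spec {G : DiGraph} {P : Finset (Finset ℕ)} (hP : G.IsDecomp P)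
    (hne : G.verts.Nonempty) :
    firstBlock G P ∈ P ∧ mnv G ∈ firstBlock G P ∧
      ∀ s ∈ P, mnv G ∈ s → s = firstBlock G P := by
  obtain ⟨s, hs, hxs, huniq⟩ := block_unique_s16 hP (mnv_mem hne)
  have hfilter : P.filter (fun t => mnv G ∈ t) = {s} := by
    ext t
    simp only [Finset.mem_filter, Finset.mem_singleton]
    constructor
    · rintro ⟨ht, hmt⟩; exact huniq t ht hmt
    · rintro rfl; exact ⟨hs, hxs⟩
  have hfb : firstBlock G P = s := by
    rw [firstBlock, hfilter, Finset.singleton_biUnion]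
    rfl
  rw [hfb]
  exact ⟨hs, hxs, fun t ht hmt => huniq t ht hmt⟩

theorem firstBlock_eq_pre {G : DiGraph} (hG : G.IsLin) {n : ℕ} (h : G.verts.card = n)
    {P : Finset (Finset ℕ)} (hP : G.IsDecomp P) (hne : G.verts.Nonempty) :
    firstBlock G P = pre G (firstBlock G P).card := by
  obtain ⟨hfb, hmfb, -⟩ := firstBlock_spec hP hne
  refine downclosed_eq_pre h (block_sub hP hfb) ?_
  intro x hx y hy hyx
  have hmy : mnv G ≤ y := mnv_le hne hy
  rcases eq_or_lt_of_le hmy with heq | hlt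
  · rw [← heq]; exact hmfb
  · rcases eq_or_lt_of_le hyx with heq2 | hlt2
    · rw [heq2]; exact hx
    · exact block_interval hG (block_sub hP hfb) (hP.2.2.2 _ hfb) (mnv G) hmfb x hx y hy hlt hlt2

theorem decomp_card_le {G : DiGraph} {n : ℕ} (h : G.verts.card = n)
    {P : Finset (Finset ℕ)} (hP : G.IsDecomp P) : P.card ≤ n := by
  have h1 : (P.biUnion id).card = ∑ s ∈ P, s.card :=
    Finset.card_biUnion (fun s hs t ht hst => hP.2.1 s hs t ht hst)
  have h2 : P.card = ∑ _s ∈ P, 1 := by simp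
  have h3 : ∑ s ∈ P, 1 ≤ ∑ s ∈ P, s.card :=
    Finset.sum_le_sum (fun s hs => Finset.card_pos.2 (hP.1 s hs))
  rw [hP.2.2.1, h] at h1
  omega

/-- The sum over all decompositions of `G` into `m` blocks of the product of
`αv` of the block sizes. -/
noncomputable def Dsum (aF : DiGraph → ℚ) (G : DiGraph) (m : ℕ) : ℚ :=
  ∑ P ∈ (DecF G).filter (fun P => P.card = m), ∏ s ∈ P, αv aF s.card

theorem empty_decomp_iff {G : DiGraph} (h0 : G.verts = ∅) {P : Finset (Finset ℕ)} :
    P ∈ DecF G ↔ P = ∅ := by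
  rw [mem_DecF]
  constructor
  · intro hP
    by_contra hne
    obtain ⟨s, hs⟩ := Finset.nonempty_iff_ne_empty.2 hne
    obtain ⟨x, hx⟩ := hP.1 s hs
    have := block_sub hP hs hx
    rw [h0] at this
    simp at this
  · rintro rfl
    refine ⟨fun s hs => absurd hs (by simp), fun s hs => absurd hs (by simp), by simp [h0],
      fun s hs => absurd hs (by simp)⟩

theorem Dsum_eq (aF : DiGraph → ℚ) : ∀ n : ℕ, ∀ G : DiGraph, G.IsLin → G.verts.card = n →
    ∀ m : ℕ, Dsum aF G m = cA aF m n := by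
  intro n
  induction n using Nat.strong_induction_on with
  | _ n IH =>
    intro G hG hcard m
    by_cases hn0 : n = 0
    · subst hn0
      have h0 : G.verts = ∅ := Finset.card_eq_zero.1 hcard
      by_cases hm0 : m = 0
      · subst hm0
        have hfil : (DecF G).filter (fun P => P.card = 0) = {∅} := by
          ext P
          simp only [Finset.mem_filter, Finset.mem_singleton]
          constructor
          · rintro ⟨hP, -⟩; exact (empty_decomp_iff h0).1 hP
          · rintro rfl
            exact ⟨(empty_decomp_iff h0).2 rfl, rfl⟩
        rw [Dsum, hfil, Finset.sum_singleton, Finset.prod_empty, cA_zero, if_pos rfl]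
      · have hfil : (DecF G).filter (fun P => P.card = m) = ∅ := by
          rw [Finset.filter_eq_empty_iff]
          intro P hP
          rw [(empty_decomp_iff h0).1 hP, Finset.card_empty]
          omega
        rw [Dsum, hfil, Finset.sum_empty, cA_vanish aF m 0 (by omega)]
    · -- n ≥ 1
      have hne : G.verts.Nonempty := by rw [← Finset.card_pos, hcard]; omega
      cases m with
      | zero =>
        have hfil : (DecF G).filter (fun P => P.card = 0) = ∅ := by
          rw [Finset.filter_eq_empty_iff]
          intro P hP hc
          rw [Finset.card_eq_zero] at hc
          subst hc
          have := (mem_DecF.1 hP).2.2.1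
          simp at this
          rw [← this] at hcard
          simp at hcard
          omega
        rw [Dsum, hfil, Finset.sum_empty, cA_zero, if_neg hn0]
      | succ m =>
        -- expansion of the power series coefficient
        have hcA : cA aF (m + 1) n = ∑ k ∈ Finset.range (n + 1), αv aF k * cA aF m (n - k) := by
          rw [cA_succ, Finset.Nat.sum_antidiagonal_eq_sum_range_succ_mk]
        rw [hcA, Dsum]
        -- fiber the decompositions by the size of the first block
        have hmaps : ∀ P ∈ (DecF G).filter (fun P => P.card = m + 1),
            (firstBlock G P).card ∈ Finset.range (n + 1) := by
          intro P hP
          rw [Finset.mem_filter] at hP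
          have hP' := mem_DecF.1 hP.1
          rw [Finset.mem_range]
          have := Finset.card_le_card (block_sub hP' (firstBlock_spec hP' hne).1)
          rw [hcard] at this
          omega
        rw [← Finset.sum_fiberwise_of_maps_to hmaps]
        refine Finset.sum_congr rfl (fun k hk => ?_)
        rw [Finset.mem_range] at hk
        by_cases hk0 : k = 0
        · subst hk0
          have hempty : ((DecF G).filter (fun P => P.card = m + 1)).filter
              (fun P => (firstBlock G P).card = 0) = ∅ := by
            rw [Finset.filter_eq_empty_iff]
            intro P hP hc
            rw [Finset.mem_filter] at hP
            have hP' := mem_DecF.1 hP.1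
            rw [Finset.card_eq_zero] at hc
            have := (firstBlock_spec hP' hne).2.1
            rw [hc] at this
            simp at this
          rw [hempty, Finset.sum_empty, alpha_zero, zero_mul]
        · -- the bijection with decompositions of the rest
          set G' := G.induce (rest G k) with hG'def
          have hG'lin : G'.IsLin := rest_lin hG k
          have hG'verts : G'.verts = rest G k := rfl
          have hG'card : G'.verts.card = n - k := by rw [hG'verts, rest_card hcard (by omega)]
          have hIH := IH (n - k) (by omega) G' hG'lin hG'card m
          rw [Dsum] at hIH
          have hpremem : mnv G ∈ pre G k := by
            rw [mem_pre]
            refine ⟨mnv_mem hne, ?_⟩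
            have : rnk G (mnv G) = 0 := by
              rw [rnk, Finset.card_eq_zero]
              rw [Finset.filter_eq_empty_iff]
              intro x hx
              have := mnv_le hne hx
              omega
            omega
          have hprecard : (pre G k).card = k := pre_card hcard (by omega)
          have hdisj : ∀ s ⊆ rest G k, Disjoint (pre G k) s := by
            intro s hs
            rw [Finset.disjoint_left]
            intro x hx hxs
            have h1 := hs hxs
            rw [mem_rest] at h1
            rw [mem_pre] at hx
            omega
          have hsplit : pre G k ∪ rest G k = G.verts := by
            ext x
            simp only [Finset.mem_union, mem_pre, mem_rest]
            constructor
            · rintro (⟨hx, -⟩ | ⟨hx, -⟩) <;> exact hx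
            · intro hx
              by_cases hc : rnk G x < k
              · exact Or.inl ⟨hx, hc⟩
              · exact Or.inr ⟨hx, by omega⟩
          have hinduce : ∀ s ⊆ rest G k, G'.induce s = G.induce s := by
            intro s hs
            refine ext'_s16 rfl (fun x y => ?_)
            show ((G.E x y ∧ _ ∧ _) ∧ x ∈ s ∧ y ∈ s) ↔ (G.E x y ∧ x ∈ s ∧ y ∈ s)
            constructor
            · rintro ⟨⟨he, -, -⟩, h1, h2⟩; exact ⟨he, h1, h2⟩
            · rintro ⟨he, h1, h2⟩
              exact ⟨⟨he, hs h1, hs h2⟩, h1, h2⟩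
          have hbij : ∑ P ∈ ((DecF G).filter (fun P => P.card = m + 1)).filter
              (fun P => (firstBlock G P).card = k), ∏ s ∈ P, αv aF s.card
              = ∑ P' ∈ (DecF G').filter (fun P => P.card = m),
                  αv aF k * ∏ s ∈ P', αv aF s.card := by
            refine Finset.sum_nbij' (fun P => P.erase (pre G k))
              (fun P' => insert (pre G k) P') ?_ ?_ ?_ ?_ ?_
            · -- maps to
              intro P hP
              simp only [Finset.mem_filter] at hP ⊢
              obtain ⟨⟨hPdec, hPcard⟩, hPfb⟩ := hP
              have hPd := mem_DecF.1 hPdec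
              have hfb := firstBlock_spec hPd hne
              have hfbpre : firstBlock G P = pre G k := by
                rw [firstBlock_eq_pre hG hcard hPd hne, hPfb]
              constructor
              · rw [mem_DecF]
                refine ⟨?_, ?_, ?_, ?_⟩
                · intro s hs
                  exact hPd.1 s (Finset.mem_of_mem_erase hs)
                · intro s hs t ht hst
                  exact hPd.2.1 s (Finset.mem_of_mem_erase hs) t (Finset.mem_of_mem_erase ht) hst
                · rw [hG'verts]
                  ext x
                  rw [Finset.mem_biUnion]
                  constructor
                  · rintro ⟨s, hs, hxs⟩
                    have hsP := Finset.mem_of_mem_erase hs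
                    have hsne := (Finset.mem_erase.1 hs).1
                    have hxv : x ∈ G.verts := block_sub hPd hsP hxs
                    rw [mem_rest]
                    refine ⟨hxv, ?_⟩
                    by_contra hc
                    have hxpre : x ∈ pre G k := by
                      rw [mem_pre]; exact ⟨hxv, by omega⟩
                    rw [← hfbpre] at hxpre
                    have := (firstBlock_spec hPd hne).1
                    have hxs0 : x ∈ firstBlock G P := hxpre
                    have hdisj2 := hPd.2.1 s hsP _ this (by rw [hfbpre]; exact hsne)
                    exact Finset.disjoint_left.1 hdisj2 hxs hxs0
                  · intro hx
                    have hxv : x ∈ G.verts := (Finset.mem_filter.1 hx).1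
                    obtain ⟨s, hs, hxs, -⟩ := block_unique_s16 hPd hxv
                    refine ⟨s, ?_, hxs⟩
                    rw [Finset.mem_erase]
                    refine ⟨?_, hs⟩
                    intro hseq
                    have hxpre : x ∈ pre G k := hseq ▸ hxs
                    rw [mem_rest] at hx
                    rw [mem_pre] at hxpre
                    omega
                · intro s hs
                  have hsP := Finset.mem_of_mem_erase hs
                  have hsrest : s ⊆ rest G k := by
                    intro x hxs
                    have hxv : x ∈ G.verts := block_sub hPd hsP hxs
                    rw [mem_rest]
                    refine ⟨hxv, ?_⟩
                    by_contra hc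
                    have hxpre : x ∈ pre G k := by
                      rw [mem_pre]; exact ⟨hxv, by omega⟩
                    rw [← hfbpre] at hxpre
                    have hdisj2 := hPd.2.1 s hsP _ (firstBlock_spec hPd hne).1
                      (by rw [hfbpre]; exact (Finset.mem_erase.1 hs).1)
                    exact Finset.disjoint_left.1 hdisj2 hxs hxpre
                  rw [hinduce s hsrest]
                  exact hPd.2.2.2 s hsP
              · rw [Finset.card_erase_of_mem (by rw [← hfbpre]; exact hfb.1)]
                omega
            · -- inverse maps to
              intro P' hP'
              simp only [Finset.mem_filter] at hP' ⊢
              obtain ⟨hP'dec, hP'card⟩ := hP'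
              have hP'd := mem_DecF.1 hP'dec
              have hblocksub : ∀ s ∈ P', s ⊆ rest G k := by
                intro s hs
                have := block_sub hP'd hs
                rw [hG'verts] at this
                exact this
              have hprenotmem : pre G k ∉ P' := by
                intro hc
                have := hblocksub _ hc hpremem
                rw [mem_rest] at this
                rw [mem_pre] at hpremem
                omega
              have hnewdec : G.IsDecomp (insert (pre G k) P') := by
                refine ⟨?_, ?_, ?_, ?_⟩
                · intro s hs
                  rcases Finset.mem_insert.1 hs with rfl | hs2
                  · exact ⟨mnv G, hpremem⟩
                  · exact hP'd.1 s hs2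
                · intro s hs t ht hst
                  rcases Finset.mem_insert.1 hs with rfl | hs2 <;>
                    rcases Finset.mem_insert.1 ht with rfl | ht2
                  · exact absurd rfl hst
                  · exact hdisj t (hblocksub t ht2)
                  · exact (hdisj s (hblocksub s hs2)).symm
                  · exact hP'd.2.1 s hs2 t ht2 hst
                · rw [Finset.biUnion_insert]
                  have : P'.biUnion id = rest G k := by rw [hP'd.2.2.1, hG'verts]
                  rw [this]
                  exact hsplit
                · intro s hs
                  rcases Finset.mem_insert.1 hs with rfl | hs2
                  · exact (pre_lin hG k).isOTree ⟨mnv G, hpremem⟩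
                  · rw [← hinduce s (hblocksub s hs2)]
                    exact hP'd.2.2.2 s hs2
              refine ⟨⟨mem_DecF.2 hnewdec, ?_⟩, ?_⟩
              · rw [Finset.card_insert_of_notMem hprenotmem, hP'card]
              · have hfb := firstBlock_spec hnewdec hne
                have : firstBlock G (insert (pre G k) P') = pre G k :=
                  (hfb.2.2 (pre G k) (Finset.mem_insert_self _ _) hpremem).symm
                rw [this, hprecard]
            · -- left inverse
              intro P hP
              simp only [Finset.mem_filter] at hP
              obtain ⟨⟨hPdec, hPcard⟩, hPfb⟩ := hP
              have hPd := mem_DecF.1 hPdec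
              have hfbpre : firstBlock G P = pre G k := by
                rw [firstBlock_eq_pre hG hcard hPd hne, hPfb]
              exact Finset.insert_erase (by rw [← hfbpre]; exact (firstBlock_spec hPd hne).1)
            · -- right inverse
              intro P' hP'
              simp only [Finset.mem_filter] at hP'
              have hP'd := mem_DecF.1 hP'.1
              have hprenotmem : pre G k ∉ P' := by
                intro hc
                have := block_sub hP'd hc hpremem
                rw [hG'verts] at this
                rw [mem_rest] at this
                rw [mem_pre] at hpremem
                omega
              exact Finset.erase_insert hprenotmem
            · -- values
              intro P hP
              simp only [Finset.mem_filter] at hP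
              obtain ⟨⟨hPdec, hPcard⟩, hPfb⟩ := hP
              have hPd := mem_DecF.1 hPdec
              have hfbpre : firstBlock G P = pre G k := by
                rw [firstBlock_eq_pre hG hcard hPd hne, hPfb]
              show ∏ s ∈ P, αv aF s.card = αv aF k * ∏ s ∈ P.erase (pre G k), αv aF s.card
              rw [← Finset.mul_prod_erase P (fun s => αv aF s.card)
                (show pre G k ∈ P from by rw [← hfbpre]; exact (firstBlock_spec hPd hne).1),
                hprecard]

          rw [hbij, ← Finset.mul_sum, hIH]

end Decomp

end DiGraph

namespace DiGraph

theorem sup_mem {s : Finset ℕ} (hne : s.Nonempty) : s.sup id ∈ s := by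
  obtain ⟨b, hb, heq⟩ := Finset.exists_mem_eq_sup' hne id
  rw [← Finset.sup'_eq_sup hne id, heq]
  exact hb

theorem le_sup_id {s : Finset ℕ} {x : ℕ} (hx : x ∈ s) : x ≤ s.sup id :=
  Finset.le_sup (f := id) hx

theorem sup_injOn {G : DiGraph} {P : Finset (Finset ℕ)} (hP : G.IsDecomp P) :
    ∀ s ∈ P, ∀ t ∈ P, s.sup id = t.sup id → s = t := by
  intro s hs t ht heq
  by_contra hne
  have h1 := sup_mem (hP.1 s hs)
  have h2 := sup_mem (hP.1 t ht)
  rw [heq] at h1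
  exact Finset.disjoint_left.1 (hP.2.1 s hs t ht hne) h1 h2

theorem quot_card {G : DiGraph} {P : Finset (Finset ℕ)} (hP : G.IsDecomp P) :
    (G.quotGraph P).verts.card = P.card := by
  show (P.image (fun s => s.sup id)).card = P.card
  rw [Finset.card_image_of_injOn (fun s hs t ht heq => sup_injOn hP s hs t ht heq)]

theorem quot_lin {G : DiGraph} (hG : G.IsLin) {P : Finset (Finset ℕ)} (hP : G.IsDecomp P) :
    (G.quotGraph P).IsLin := by
  intro b b'
  show (b ≠ b' ∧ ∃ s ∈ P, ∃ t ∈ P, s.sup id = b ∧ t.sup id = b' ∧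
      ∃ i ∈ s, ∃ j ∈ t, G.E i j) ↔ consec (P.image (fun s => s.sup id)) b b'
  constructor
  · rintro ⟨hbb', s, hs, t, ht, rfl, rfl, i, hi, j, hj, hEij⟩
    have hst : s ≠ t := fun hh => hbb' (by rw [hh])
    have hdisj := hP.2.1 s hs t ht hst
    rw [hG] at hEij
    obtain ⟨hiv, hjv, hij, hbet⟩ := hEij
    have hsubs := block_sub hP hs
    have hsubt := block_sub hP ht
    have hints := block_interval hG hsubs (hP.2.2.2 s hs)
    have hintt := block_interval hG hsubt (hP.2.2.2 t ht)
    have claim1 : ∀ x ∈ s, x ≤ i := by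
      intro x hx
      by_contra hc
      push_neg at hc
      rcases hbet x (hsubs hx) with h1 | h1
      · omega
      · rcases eq_or_lt_of_le h1 with heq | hlt
        · rw [← heq] at hx
          exact Finset.disjoint_left.1 hdisj hx hj
        · exact Finset.disjoint_left.1 hdisj (hints i hi x hx j hjv hij hlt) hj
    have claim2 : ∀ y ∈ t, j ≤ y := by
      intro y hy
      by_contra hc
      push_neg at hc
      rcases hbet y (hsubt hy) with h1 | h1
      · rcases eq_or_lt_of_le h1 with heq | hlt
        · rw [heq] at hy
          exact Finset.disjoint_left.1 hdisj hi hy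
        · exact Finset.disjoint_left.1 hdisj hi (hintt y hy j hj i hiv hlt hij)
      · omega
    have hsups : s.sup id = i := le_antisymm (claim1 _ (sup_mem (hP.1 s hs))) (le_sup_id hi)
    have hsupt : j ≤ t.sup id := claim2 _ (sup_mem (hP.1 t ht))
    refine ⟨Finset.mem_image_of_mem _ hs, Finset.mem_image_of_mem _ ht, by omega, ?_⟩
    intro c hc
    obtain ⟨u, hu, rfl⟩ := Finset.mem_image.1 hc
    by_contra hcon
    push_neg at hcon
    obtain ⟨h1, h2⟩ := hcon
    have husup : u.sup id ∈ u := sup_mem (hP.1 u hu)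
    have husupv : u.sup id ∈ G.verts := block_sub hP hu husup
    have hju : j ≤ u.sup id := by
      rcases hbet (u.sup id) husupv with hcc | hcc
      · omega
      · exact hcc
    have huint : u.sup id ∈ t := by
      rcases eq_or_lt_of_le hju with heq | hlt
      · rw [← heq]; exact hj
      · rcases eq_or_lt_of_le (le_of_lt h2) with heq | hlt2
        · rw [heq]; exact sup_mem (hP.1 t ht)
        · exact hintt j hj (t.sup id) (sup_mem (hP.1 t ht)) (u.sup id) husupv hlt h2
    have huet : u = t := by
      by_contra hne
      exact Finset.disjoint_left.1 (hP.2.1 u hu t ht hne) husup huint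
    rw [huet] at h2
    exact absurd h2 (lt_irrefl _)
  · rintro ⟨hbm, hb'm, hlt, hbet⟩
    obtain ⟨s, hs, rfl⟩ := Finset.mem_image.1 hbm
    obtain ⟨t, ht, hb'⟩ := Finset.mem_image.1 hb'm
    have hsubs := block_sub hP hs
    have hsubt := block_sub hP ht
    have hsupsm : s.sup id ∈ G.verts := hsubs (sup_mem (hP.1 s hs))
    have hb'v : t.sup id ∈ G.verts := hsubt (sup_mem (hP.1 t ht))
    have hSne : (G.verts.filter (s.sup id < ·)).Nonempty := by
      refine ⟨t.sup id, Finset.mem_filter.2 ⟨hb'v, ?_⟩⟩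
      omega
    set j := (G.verts.filter (s.sup id < ·)).min' hSne with hjdef
    have hjmem : j ∈ G.verts ∧ s.sup id < j :=
      Finset.mem_filter.1 ((G.verts.filter (s.sup id < ·)).min'_mem hSne)
    have hjle : j ≤ t.sup id := by
      refine Finset.min'_le _ _ (Finset.mem_filter.2 ⟨hb'v, ?_⟩)
      omega
    have hcons : consec G.verts (s.sup id) j := by
      refine ⟨hsupsm, hjmem.1, hjmem.2, fun k hk => ?_⟩
      by_contra hcon
      push_neg at hcon
      have h5 : j ≤ k := Finset.min'_le _ k (Finset.mem_filter.2 ⟨hk, hcon.1⟩)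
      omega
    have hjbi : j ∈ P.biUnion id := by rw [hP.2.2.1]; exact hjmem.1
    rw [Finset.mem_biUnion] at hjbi
    obtain ⟨u, hu, hju⟩ := hjbi
    replace hju : j ∈ u := hju
    have hintt := block_interval hG hsubt (hP.2.2.2 t ht)
    have hintu := block_interval hG (block_sub hP hu) (hP.2.2.2 u hu)
    have hub' : t.sup id ≤ u.sup id := by
      by_contra hc
      push_neg at hc
      rcases hbet (u.sup id) (Finset.mem_image_of_mem _ hu) with hcc | hcc
      · have := le_sup_id hju
        omega
      · rw [hb'] at hc
        omega
    have hb'u : t.sup id ∈ u := by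
      rcases eq_or_lt_of_le hjle with heq | hlt2
      · rw [← heq]; exact hju
      · rcases eq_or_lt_of_le hub' with heq | hlt3
        · rw [heq]; exact sup_mem (hP.1 u hu)
        · exact hintu j hju (u.sup id) (sup_mem (hP.1 u hu)) (t.sup id) hb'v hlt2 hlt3
    have huet : u = t := by
      by_contra hne
      exact Finset.disjoint_left.1 (hP.2.1 u hu t ht hne) hb'u (sup_mem (hP.1 t ht))
    refine ⟨by omega, s, hs, t, ht, rfl, hb', s.sup id, sup_mem (hP.1 s hs), j, ?_, ?_⟩
    · rw [← huet]; exact hju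
    · rw [hG]; exact hcons

section EVal

variable (aF eF : DiGraph → ℚ)

theorem Sv_eq_zero (haF : ARec aF) {n : ℕ} (hn : 2 ≤ n) : Sv aF n = 0 := by
  obtain ⟨m, rfl⟩ : ∃ m, n = m + 2 := ⟨n - 2, by omega⟩
  have h := Sv_succ aF haF (m + 1)
  rw [if_neg (Nat.succ_ne_zero m)] at h
  have hne : (((m + 1 : ℕ) : ℚ) + 1) ≠ 0 := by positivity
  have h2 := mul_eq_zero.1 h
  rcases h2 with h2 | h2
  · exact absurd h2 hne
  · exact h2

theorem Sv_one' (haF : ARec aF) : Sv aF 1 = 1 := by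
  have h := Sv_succ aF haF 0
  rw [if_pos rfl] at h
  push_cast at h
  linarith

/-- The singleton decomposition. -/
noncomputable def singP (G : DiGraph) : Finset (Finset ℕ) :=
  G.verts.image (fun x => {x})

theorem singP_decomp {G : DiGraph} (hG : G.IsLin) : G.IsDecomp (singP G) := by
  refine ⟨?_, ?_, ?_, ?_⟩
  · intro s hs
    obtain ⟨x, hx, rfl⟩ := Finset.mem_image.1 hs
    exact ⟨x, Finset.mem_singleton_self x⟩
  · intro s hs t ht hst
    obtain ⟨x, hx, rfl⟩ := Finset.mem_image.1 hs
    obtain ⟨y, hy, rfl⟩ := Finset.mem_image.1 ht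
    rw [Finset.disjoint_left]
    intro z hz1 hz2
    rw [Finset.mem_singleton] at hz1 hz2
    exact hst (by rw [hz1] at hz2; rw [hz2])
  · ext x
    rw [Finset.mem_biUnion]
    constructor
    · rintro ⟨s, hs, hxs⟩
      obtain ⟨y, hy, rfl⟩ := Finset.mem_image.1 hs
      have hxs' : x ∈ ({y} : Finset ℕ) := hxs
      rw [Finset.mem_singleton] at hxs'
      rw [hxs']; exact hy
    · intro hx
      exact ⟨{x}, Finset.mem_image_of_mem _ hx, Finset.mem_singleton_self x⟩
  · intro s hs
    obtain ⟨x, hx, rfl⟩ := Finset.mem_image.1 hs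
    refine (hG.induce_interval ?_ ?_).isOTree ⟨x, Finset.mem_singleton_self x⟩
    · intro z hz
      rw [Finset.mem_singleton] at hz
      rw [hz]; exact hx
    · intro i hi j hj k hk h1 h2
      rw [Finset.mem_singleton] at hi hj
      omega

theorem singP_card {G : DiGraph} : (singP G).card = G.verts.card := by
  rw [singP, Finset.card_image_of_injective _ Finset.singleton_injective]

theorem card_eq_imp_singP {G : DiGraph} {n : ℕ} (hcard : G.verts.card = n)
    {P : Finset (Finset ℕ)} (hP : G.IsDecomp P) (hc : P.card = n) : P = singP G := by
  have h1 : (P.biUnion id).card = ∑ s ∈ P, s.card :=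
    Finset.card_biUnion (fun s hs t ht hst => hP.2.1 s hs t ht hst)
  rw [hP.2.2.1, hcard] at h1
  have hone : ∀ s ∈ P, s.card = 1 := by
    by_contra hcon
    push_neg at hcon
    obtain ⟨s, hs, hsne⟩ := hcon
    have h2 : ∑ _s ∈ P, 1 < ∑ s ∈ P, s.card := by
      refine Finset.sum_lt_sum (fun t ht => Finset.card_pos.2 (hP.1 t ht)) ⟨s, hs, ?_⟩
      have := Finset.card_pos.2 (hP.1 s hs)
      omega
    rw [Finset.sum_const, smul_eq_mul, mul_one, hc] at h2
    omega
  have hsub : P ⊆ singP G := by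
    intro s hs
    obtain ⟨x, hx⟩ := Finset.card_eq_one.1 (hone s hs)
    rw [hx]
    have hxv : x ∈ G.verts := block_sub hP hs (by rw [hx]; exact Finset.mem_singleton_self x)
    exact Finset.mem_image_of_mem _ hxv
  refine Finset.eq_of_subset_of_card_le hsub ?_
  rw [singP_card, hcard, hc]

theorem eval (haF : ARec aF) (heF : ERec aF eF) : ∀ (n : ℕ) (G : DiGraph), G.IsLin →
    G.verts.card = n → G.verts.Nonempty → eF G = εv n := by
  intro n
  induction n using Nat.strong_induction_on with
  | _ n IH =>
    intro G hG hcard hne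
    match n, hcard with
    | 0, hcard => exact absurd hcard (by rw [← Finset.card_pos] at hne; omega)
    | 1, hcard =>
      rw [heF.1 G (hG.isOTree hne) hcard, εv, if_pos (by decide)]
      norm_num
    | (m + 2), hcard =>
      have hOT := hG.isOTree hne
      rw [heF.2 G hOT (by omega)]
      have hset : (G.verts.powerset.powerset).filter
          (fun P => G.IsDecomp P ∧ P.card < G.verts.card)
          = (DecF G).filter (fun P => P.card < m + 2) := by
        ext P
        constructor
        · intro h
          rw [Finset.mem_filter] at h
          exact Finset.mem_filter.2 ⟨mem_DecF.2 h.2.1, by rw [← hcard]; exact h.2.2⟩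
        · intro h
          rw [Finset.mem_filter] at h
          have hpp : P ∈ G.verts.powerset.powerset := by
            rw [DecF, Finset.mem_filter] at h
            exact h.1.1
          exact Finset.mem_filter.2 ⟨hpp, mem_DecF.1 h.1, by rw [hcard]; exact h.2⟩
      rw [hset]
      have hterm : ∀ P ∈ (DecF G).filter (fun P => P.card < m + 2),
          eF (G.quotGraph P) * ∏ s ∈ P, aF (G.induce s)
          = εv P.card * ∏ s ∈ P, αv aF s.card := by
        intro P hP
        rw [Finset.mem_filter] at hP
        have hPd := mem_DecF.1 hP.1
        have hPne : P.Nonempty := by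
          rw [Finset.nonempty_iff_ne_empty]
          rintro rfl
          have := hPd.2.2.1
          simp at this
          rw [← this] at hne
          simp at hne
        have hquote : eF (G.quotGraph P) = εv P.card := by
          refine IH P.card (by omega) (G.quotGraph P) (quot_lin hG hPd) (quot_card hPd) ?_
          show ((G.quotGraph P).verts).Nonempty
          rw [← Finset.card_pos, quot_card hPd]
          exact Finset.card_pos.2 hPne
        have hprod : ∏ s ∈ P, aF (G.induce s) = ∏ s ∈ P, αv aF s.card := by
          refine Finset.prod_congr rfl (fun s hs => ?_)
          have hlin : (G.induce s).IsLin := hG.induce_interval (block_sub hPd hs)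
            (block_interval hG (block_sub hPd hs) (hPd.2.2.2 s hs))
          exact aval aF haF s.card (G.induce s) hlin rfl (hPd.1 s hs)
        rw [hquote, hprod]
      rw [Finset.sum_congr rfl hterm]
      -- split the full decomposition sum
      have hsplit := Finset.sum_filter_add_sum_filter_not (DecF G)
        (fun P => P.card < m + 2) (fun P => εv P.card * ∏ s ∈ P, αv aF s.card)
      have hfull : ∑ P ∈ DecF G, εv P.card * ∏ s ∈ P, αv aF s.card = Sv aF (m + 2) := by
        have hmaps : ∀ P ∈ DecF G, P.card ∈ Finset.range (m + 2 + 1) := by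
          intro P hP
          rw [Finset.mem_range]
          have := decomp_card_le hcard (mem_DecF.1 hP)
          omega
        rw [← Finset.sum_fiberwise_of_maps_to hmaps, Sv]
        refine Finset.sum_congr rfl (fun m' hm' => ?_)
        have hinner : ∀ P ∈ (DecF G).filter (fun P => P.card = m'),
            εv P.card * ∏ s ∈ P, αv aF s.card = εv m' * ∏ s ∈ P, αv aF s.card := by
          intro P hP
          rw [(Finset.mem_filter.1 hP).2]
        rw [Finset.sum_congr rfl hinner, ← Finset.mul_sum]
        rw [show ∑ P ∈ (DecF G).filter (fun P => P.card = m'), ∏ s ∈ P, αv aF s.card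
          = Dsum aF G m' from rfl]
        rw [Dsum_eq aF (m + 2) G hG hcard m']
      have hnotlt : (DecF G).filter (fun P => ¬ P.card < m + 2) = {singP G} := by
        ext P
        rw [Finset.mem_filter, Finset.mem_singleton]
        constructor
        · rintro ⟨hP, hPc⟩
          have hPd := mem_DecF.1 hP
          have hle := decomp_card_le hcard hPd
          exact card_eq_imp_singP hcard hPd (by omega)
        · rintro rfl
          refine ⟨mem_DecF.2 (singP_decomp hG), ?_⟩
          rw [singP_card, hcard]
          omega
      have hsing : ∑ P ∈ {singP G}, εv P.card * ∏ s ∈ P, αv aF s.card = εv (m + 2) := by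
        rw [Finset.sum_singleton, singP_card, hcard]
        have hprod1 : ∏ s ∈ singP G, αv aF s.card = 1 := by
          rw [singP, Finset.prod_image (fun x _ y _ hxy => Finset.singleton_injective hxy)]
          refine Finset.prod_eq_one (fun x hx => ?_)
          rw [Finset.card_singleton]
          exact alpha_one' aF haF
        rw [hprod1, mul_one]
      rw [hnotlt, hsing, hfull] at hsplit
      rw [Sv_eq_zero aF haF (by omega)] at hsplit
      linarith

end EVal

end DiGraph

/-- For the linear tree `L_n` with `n` vertices, the coefficient `e_{L_n}` from the
collapse recursion `e_T = −Σ_{m<n_T} Σ_{∪Tₖ≃T} e_{T/{Tₖ}} ∏ₖ a_{Tₖ}`, `e_• = 1`,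
equals `1/n` when `n` is odd (e.g. `e_{L₃} = 1/3`, `e_{L₅} = 1/5`, `e_{L₇} = 1/7`) and
`0` when `n` is even.  (Here `linTree k` is the linear tree with `k+1` vertices.) -/
theorem eT_linear_tree_values (a e : DiGraph → ℚ)
    (ha : DiGraph.ARec a) (he : DiGraph.ERec a e) :
    e (linTree 2) = 1/3 ∧ e (linTree 4) = 1/5 ∧ e (linTree 6) = 1/7 ∧
      (∀ n : ℕ, Even n → e (linTree n) = 1 / ((n : ℚ) + 1)) ∧
      (∀ n : ℕ, Odd n → e (linTree n) = 0) := by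
  have hval : ∀ k : ℕ, e (linTree k) = DiGraph.εv (k + 1) := fun k =>
    DiGraph.eval a e ha he (k + 1) (linTree k) (DiGraph.linTree_isLin k)
      (DiGraph.linTree_card k) (DiGraph.linTree_nonempty k)
  refine ⟨?_, ?_, ?_, ?_, ?_⟩
  · rw [hval 2, DiGraph.εv, if_pos (by decide : Odd 3)]
    norm_num
  · rw [hval 4, DiGraph.εv, if_pos (by decide : Odd 5)]
    norm_num
  · rw [hval 6, DiGraph.εv, if_pos (by decide : Odd 7)]
    norm_num
  · intro n hn
    rw [hval n, DiGraph.εv, if_pos (Even.add_one hn)]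
    push_cast
    ring
  · intro n hn
    rw [hval n, DiGraph.εv, if_neg (Nat.not_odd_iff_even.2 (Odd.add_one hn))]
end
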